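/- arXiv:1204.4554 — 8 statements merged into one kernel-verified Lean document; each statement's English description precedes it below -/
import Mathlib

section
/- Let X be a real-valued integrable random variable on a probability space, F a sub-σ-algebra, p ≥ 1 and ε > 0. Then E(|X|^p · 1_{|E(X|F)| > 2ε}) ≤ 2 E(|X|^p · 1_{|X| > ε}). -/
open MeasureTheory ProbabilityTheory Filter

private lemma aux_stmt0 {Ω : Type*} [m0 : MeasurableSpace Ω] (μ : Measure Ω)
    [IsProbabilityMeasure μ] (X g : Ω → ℝ) (hX : Integrable X μ)
    (p : ℝ) (hp : 1 ≤ p) (hXp : Integrable (fun ω => |X ω| ^ p) μ)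
    (ε : ℝ) (hε : 0 < ε)
    (hA : MeasurableSet {ω | 2 * ε < |g ω|})
    (hg : Integrable g μ)
    (hgX : ∫ ω in {ω | 2 * ε < |g ω|}, |g ω| ∂μ ≤ ∫ ω in {ω | 2 * ε < |g ω|}, |X ω| ∂μ) :
    ∫ ω in {ω | 2 * ε < |g ω|}, |X ω| ^ p ∂μ
      ≤ 2 * ∫ ω in {ω | ε < |X ω|}, |X ω| ^ p ∂μ := by
  set A : Set Ω := {ω | 2 * ε < |g ω|} with hAdef
  set B : Set Ω := {ω | ε < |X ω|} with hBdef
  have habs : Integrable (fun ω => |X ω|) μ := hX.abs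
  have hB0 : NullMeasurableSet B μ :=
    nullMeasurableSet_lt aemeasurable_const habs.aemeasurable
  have hμA : μ A ≠ ⊤ := measure_ne_top μ A
  have hμAB : (μ (A \ B)).toReal ≤ (μ A).toReal :=
    ENNReal.toReal_mono hμA (measure_mono Set.diff_subset)
  have h1 : 2 * ε * (μ A).toReal ≤ ∫ ω in A, |g ω| ∂μ :=
    setIntegral_ge_of_const_le_real hA hμA (fun x hx => le_of_lt hx) hg.abs.integrableOn
  have hsplit : ∫ ω in A ∩ B, |X ω| ∂μ + ∫ ω in A \ B, |X ω| ∂μ = ∫ ω in A, |X ω| ∂μ :=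
    integral_inter_add_diff₀ hB0 habs.integrableOn
  have hABle : ∀ {f : Ω → ℝ}, Integrable f μ → (∀ᵐ ω ∂μ, 0 ≤ f ω) →
      ∫ ω in A ∩ B, f ω ∂μ ≤ ∫ ω in B, f ω ∂μ := fun {f} hf hf0 =>
    setIntegral_mono_set hf.integrableOn (ae_restrict_of_ae hf0)
      (HasSubset.Subset.eventuallyLE Set.inter_subset_right)
  have hADB : NullMeasurableSet (A \ B) μ := hA.nullMeasurableSet.diff hB0
  have hdiff1 : ∫ ω in A \ B, |X ω| ∂μ ≤ ε * (μ A).toReal := by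
    have hb : ∀ᵐ ω ∂μ.restrict (A \ B), |X ω| ≤ ε :=
      Filter.Eventually.mono (ae_restrict_mem₀ hADB) fun ω hω => le_of_not_gt hω.2
    calc ∫ ω in A \ B, |X ω| ∂μ ≤ ∫ _ω in A \ B, ε ∂μ :=
          setIntegral_mono_ae_restrict habs.integrableOn
            (integrableOn_const (measure_ne_top μ _)) hb
      _ = (μ (A \ B)).toReal * ε := by rw [setIntegral_const, smul_eq_mul]; rfl
      _ ≤ (μ A).toReal * ε := by nlinarith [hμAB]
      _ = ε * (μ A).toReal := mul_comm _ _
  have hkey : ε * (μ A).toReal ≤ ∫ ω in B, |X ω| ∂μ := by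
    have h3 : 2 * ε * (μ A).toReal ≤ ∫ ω in B, |X ω| ∂μ + ε * (μ A).toReal := by
      calc 2 * ε * (μ A).toReal ≤ ∫ ω in A, |X ω| ∂μ := h1.trans hgX
        _ = ∫ ω in A ∩ B, |X ω| ∂μ + ∫ ω in A \ B, |X ω| ∂μ := hsplit.symm
        _ ≤ ∫ ω in B, |X ω| ∂μ + ε * (μ A).toReal :=
            add_le_add (hABle habs (ae_of_all _ fun ω => abs_nonneg _)) hdiff1
    nlinarith [h3]
  have hXpnn : ∀ᵐ ω ∂μ, 0 ≤ |X ω| ^ p :=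
    ae_of_all _ fun ω => Real.rpow_nonneg (abs_nonneg _) _
  have hεμ : ε ^ p * (μ A).toReal ≤ ∫ ω in B, |X ω| ^ p ∂μ := by
    have e1 : ε ^ p * (μ A).toReal = ε ^ (p - 1) * (ε * (μ A).toReal) := by
      rw [← mul_assoc, ← Real.rpow_add_one hε.ne' (p - 1)]
      ring_nf
    rw [e1]
    calc ε ^ (p - 1) * (ε * (μ A).toReal) ≤ ε ^ (p - 1) * ∫ ω in B, |X ω| ∂μ := by
          have := Real.rpow_nonneg hε.le (p - 1)
          nlinarith [hkey]
      _ = ∫ ω in B, ε ^ (p - 1) * |X ω| ∂μ := (integral_const_mul _ _).symm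
      _ ≤ ∫ ω in B, |X ω| ^ p ∂μ := by
          refine setIntegral_mono_ae_restrict ((habs.const_mul _).integrableOn)
            hXp.integrableOn ?_
          refine Filter.Eventually.mono (ae_restrict_mem₀ hB0) ?_
          intro ω hω
          have hωpos : 0 < |X ω| := hε.trans hω
          calc ε ^ (p - 1) * |X ω| ≤ |X ω| ^ (p - 1) * |X ω| := by
                have h4 : ε ^ (p - 1) ≤ |X ω| ^ (p - 1) :=
                  Real.rpow_le_rpow hε.le hω.le (by linarith)
                nlinarith [abs_nonneg (X ω)]
            _ = |X ω| ^ p := by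
                rw [← Real.rpow_add_one hωpos.ne' (p - 1)]
                ring_nf
  have hfinsplit : ∫ ω in A ∩ B, |X ω| ^ p ∂μ + ∫ ω in A \ B, |X ω| ^ p ∂μ
      = ∫ ω in A, |X ω| ^ p ∂μ := integral_inter_add_diff₀ hB0 hXp.integrableOn
  have hdiffp : ∫ ω in A \ B, |X ω| ^ p ∂μ ≤ ε ^ p * (μ A).toReal := by
    have hb : ∀ᵐ ω ∂μ.restrict (A \ B), |X ω| ^ p ≤ ε ^ p :=
      Filter.Eventually.mono (ae_restrict_mem₀ hADB) fun ω hω =>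
        Real.rpow_le_rpow (abs_nonneg _) (le_of_not_gt hω.2) (by linarith)
    calc ∫ ω in A \ B, |X ω| ^ p ∂μ ≤ ∫ _ω in A \ B, ε ^ p ∂μ :=
          setIntegral_mono_ae_restrict hXp.integrableOn
            (integrableOn_const (measure_ne_top μ _)) hb
      _ = (μ (A \ B)).toReal * ε ^ p := by rw [setIntegral_const, smul_eq_mul]; rfl
      _ ≤ (μ A).toReal * ε ^ p := by
          have := Real.rpow_nonneg hε.le p
          nlinarith [hμAB]
      _ = ε ^ p * (μ A).toReal := mul_comm _ _
  calc ∫ ω in A, |X ω| ^ p ∂μ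
      = ∫ ω in A ∩ B, |X ω| ^ p ∂μ + ∫ ω in A \ B, |X ω| ^ p ∂μ := hfinsplit.symm
    _ ≤ ∫ ω in B, |X ω| ^ p ∂μ + ε ^ p * (μ A).toReal :=
        add_le_add (hABle hXp hXpnn) hdiffp
    _ ≤ ∫ ω in B, |X ω| ^ p ∂μ + ∫ ω in B, |X ω| ^ p ∂μ := add_le_add le_rfl hεμ
    _ = 2 * ∫ ω in B, |X ω| ^ p ∂μ := by ring

/-- Lemma "curiouslma", first inequality: for `p ≥ 1` and `ε > 0`,
`E(|X|^p · 1_{|E(X|F)| > 2ε}) ≤ 2 E(|X|^p · 1_{|X| > ε})`. -/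
theorem stmt0 {Ω : Type*} {m0 : MeasurableSpace Ω} (μ : Measure Ω) [IsProbabilityMeasure μ]
    (m : MeasurableSpace Ω) (hm : m ≤ m0) (X : Ω → ℝ) (hX : Integrable X μ)
    (p : ℝ) (hp : 1 ≤ p) (hXp : Integrable (fun ω => |X ω| ^ p) μ)
    (ε : ℝ) (hε : 0 < ε) :
    ∫ ω in {ω | 2 * ε < |(μ[X|m]) ω|}, |X ω| ^ p ∂μ
      ≤ 2 * ∫ ω in {ω | ε < |X ω|}, |X ω| ^ p ∂μ := by
  have h1 : StronglyMeasurable[m] (μ[X|m]) := stronglyMeasurable_condExp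
  have h2 : Measurable[m] fun ω => |(μ[X|m]) ω| := h1.measurable.abs
  have hAm : MeasurableSet[m] {ω | 2 * ε < |(μ[X|m]) ω|} :=
    measurableSet_lt measurable_const h2
  exact aux_stmt0 (m0 := m0) μ X (μ[X|m]) hX p hp hXp ε hε (hm _ hAm)
    (integrable_condExp (m := m) (m₀ := m0) (μ := μ) (f := X))
    (setIntegral_abs_condExp_le hAm X)
end

section
/- Let X be a real-valued integrable random variable, F a sub-σ-algebra, Y = X − E(X|F), p ≥ 1 and ε > 0. Then E(|X|^p · 1_{|Y| > 3ε}) ≤ 2 E(|X|^p · 1_{|X| > ε}). -/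
set_option maxHeartbeats 1000000

open MeasureTheory ProbabilityTheory Filter

private theorem stmt1_aux {Ω : Type*} [m0 : MeasurableSpace Ω] (μ : Measure Ω)
    [IsProbabilityMeasure μ] (X' Z : Ω → ℝ)
    (hX'sm : StronglyMeasurable X') (hZsm : StronglyMeasurable Z)
    (hX'int : Integrable X' μ) (hZint : Integrable Z μ)
    (p : ℝ) (hp : 1 ≤ p) (hg : Integrable (fun ω => |X' ω| ^ p) μ)
    (ε : ℝ) (hε : 0 < ε)
    (hcond : ∫ ω in {ω | 2 * ε < |Z ω|}, |Z ω| ∂μ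
      ≤ ∫ ω in {ω | 2 * ε < |Z ω|}, |X' ω| ∂μ) :
    ∫ ω in {ω | 3 * ε < |X' ω - Z ω|}, |X' ω| ^ p ∂μ
      ≤ 2 * ∫ ω in {ω | ε < |X' ω|}, |X' ω| ^ p ∂μ := by
  have hp0 : (0:ℝ) ≤ p := le_trans zero_le_one hp
  set A : Set Ω := {ω | 3 * ε < |X' ω - Z ω|} with hAdef
  set B : Set Ω := {ω | ε < |X' ω|} with hBdef
  set C : Set Ω := {ω | 2 * ε < |Z ω|} with hCdef
  have hAmeas : MeasurableSet A :=
    measurableSet_lt measurable_const (hX'sm.measurable.sub hZsm.measurable).abs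
  have hBmeas : MeasurableSet B :=
    measurableSet_lt measurable_const hX'sm.measurable.abs
  have hCmeas : MeasurableSet C :=
    measurableSet_lt measurable_const hZsm.measurable.abs
  set g : Ω → ℝ := fun ω => |X' ω| ^ p with hgdef
  have hg0 : ∀ ω, 0 ≤ g ω := fun ω => Real.rpow_nonneg (abs_nonneg _) p
  have hg0' : ∀ s : Set Ω, 0 ≤ᵐ[μ.restrict s] g := fun s =>
    Filter.Eventually.of_forall hg0
  have hABC : A ⊆ B ∪ C := by
    intro ω hA
    by_contra hcon
    simp only [Set.mem_union, not_or] at hcon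
    obtain ⟨hB, hC⟩ := hcon
    simp only [hAdef, hBdef, hCdef, Set.mem_setOf_eq, not_lt] at hA hB hC
    have := abs_sub (X' ω) (Z ω)
    linarith
  set M : ℝ := (μ C).toReal with hMdef
  have hμC : μ C ≠ ⊤ := measure_ne_top μ C
  have hCBsub : ∀ ω ∈ C \ B, |X' ω| ≤ ε := fun ω hω => not_lt.1 hω.2
  have hCB : (μ (C \ B)).toReal ≤ M :=
    ENNReal.toReal_mono hμC (measure_mono Set.diff_subset)
  have habsint : Integrable (fun ω => |X' ω|) μ := hX'int.abs
  -- step: ε * M ≤ ∫_B |X'|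
  have key2 : ε * M ≤ ∫ ω in B, |X' ω| ∂μ := by
    have h1 : 2 * ε * M ≤ ∫ ω in C, |Z ω| ∂μ :=
      setIntegral_ge_of_const_le_real hCmeas hμC (fun ω hω => le_of_lt hω)
        hZint.abs.integrableOn
    have hsplit : ∫ ω in C, |X' ω| ∂μ
        = (∫ ω in C ∩ B, |X' ω| ∂μ) + ∫ ω in C \ B, |X' ω| ∂μ := by
      rw [← setIntegral_union (Set.disjoint_sdiff_right.mono_left Set.inter_subset_right)
        (hCmeas.diff hBmeas) habsint.integrableOn habsint.integrableOn,
        Set.inter_union_diff]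
    have h4 : ∫ ω in C ∩ B, |X' ω| ∂μ ≤ ∫ ω in B, |X' ω| ∂μ :=
      setIntegral_mono_set habsint.integrableOn
        (Filter.Eventually.of_forall fun ω => abs_nonneg _)
        (HasSubset.Subset.eventuallyLE Set.inter_subset_right)
    have h5 : ∫ ω in C \ B, |X' ω| ∂μ ≤ ε * M := by
      calc ∫ ω in C \ B, |X' ω| ∂μ ≤ ∫ _ω in C \ B, ε ∂μ := by
            apply setIntegral_mono_on habsint.integrableOn
              integrableOn_const
              (hCmeas.diff hBmeas) hCBsub
        _ = (μ (C \ B)).toReal * ε := by rw [setIntegral_const]; rfl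
        _ ≤ M * ε := by nlinarith [hCB]
        _ = ε * M := mul_comm _ _
    linarith [hcond, hsplit, h4, h5, h1]
  -- step: ε ^ p * M ≤ ∫_B g
  have key3 : ε ^ p * M ≤ ∫ ω in B, g ω ∂μ := by
    have hM0 : (0:ℝ) ≤ M := ENNReal.toReal_nonneg
    have h1 : ε ^ p * M = ε ^ (p - 1) * (ε * M) := by
      rw [← mul_assoc, ← Real.rpow_add_one hε.ne' (p - 1)]
      ring_nf
    have h2 : ε ^ (p - 1) * (ε * M) ≤ ε ^ (p - 1) * ∫ ω in B, |X' ω| ∂μ :=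
      mul_le_mul_of_nonneg_left key2 (Real.rpow_nonneg hε.le _)
    have h3 : ε ^ (p - 1) * ∫ ω in B, |X' ω| ∂μ
        = ∫ ω in B, ε ^ (p - 1) * |X' ω| ∂μ := (integral_const_mul _ _).symm
    have h4 : ∫ ω in B, ε ^ (p - 1) * |X' ω| ∂μ ≤ ∫ ω in B, g ω ∂μ := by
      apply setIntegral_mono_on (habsint.const_mul _).integrableOn
        hg.integrableOn hBmeas
      intro ω hω
      have hω' : ε < |X' ω| := hω
      have hX0 : (0:ℝ) < |X' ω| := lt_trans hε hω'
      have hle : ε ^ (p - 1) ≤ |X' ω| ^ (p - 1) :=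
        Real.rpow_le_rpow hε.le hω'.le (by linarith)
      calc ε ^ (p - 1) * |X' ω| ≤ |X' ω| ^ (p - 1) * |X' ω| :=
            mul_le_mul_of_nonneg_right hle (abs_nonneg _)
        _ = |X' ω| ^ p := by
            rw [← Real.rpow_add_one hX0.ne' (p - 1)]; ring_nf
    linarith
  -- split A
  have hsplitA : ∫ ω in A, g ω ∂μ
      = (∫ ω in A ∩ B, g ω ∂μ) + ∫ ω in A \ B, g ω ∂μ := by
    rw [← setIntegral_union (Set.disjoint_sdiff_right.mono_left Set.inter_subset_right)
      (hAmeas.diff hBmeas) hg.integrableOn hg.integrableOn, Set.inter_union_diff]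
  have hIB : ∫ ω in A ∩ B, g ω ∂μ ≤ ∫ ω in B, g ω ∂μ :=
    setIntegral_mono_set hg.integrableOn (hg0' _)
      (HasSubset.Subset.eventuallyLE Set.inter_subset_right)
  have hIC : ∫ ω in A \ B, g ω ∂μ ≤ ∫ ω in B, g ω ∂μ := by
    have hsub : A \ B ⊆ C \ B := fun ω hω =>
      ⟨(hABC hω.1).resolve_left hω.2, hω.2⟩
    calc ∫ ω in A \ B, g ω ∂μ ≤ ∫ ω in C \ B, g ω ∂μ :=
          setIntegral_mono_set hg.integrableOn (hg0' _)
            (HasSubset.Subset.eventuallyLE hsub)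
      _ ≤ ∫ _ω in C \ B, ε ^ p ∂μ := by
          apply setIntegral_mono_on hg.integrableOn
            integrableOn_const
            (hCmeas.diff hBmeas)
          intro ω hω
          exact Real.rpow_le_rpow (abs_nonneg _) (hCBsub ω hω) hp0
      _ = (μ (C \ B)).toReal * ε ^ p := by rw [setIntegral_const]; rfl
      _ ≤ ε ^ p * M := by nlinarith [hCB, Real.rpow_nonneg hε.le p]
      _ ≤ ∫ ω in B, g ω ∂μ := key3
  linarith

/-- Lemma "curiouslma", second inequality: with `Y = X − E(X|F)`,
`E(|X|^p · 1_{|Y| > 3ε}) ≤ 2 E(|X|^p · 1_{|X| > ε})`. -/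
theorem stmt1 {Ω : Type*} {m0 : MeasurableSpace Ω} (μ : Measure Ω) [IsProbabilityMeasure μ]
    (m : MeasurableSpace Ω) (hm : m ≤ m0) (X : Ω → ℝ) (hX : Integrable X μ)
    (p : ℝ) (hp : 1 ≤ p) (hXp : Integrable (fun ω => |X ω| ^ p) μ)
    (ε : ℝ) (hε : 0 < ε)
    (Y : Ω → ℝ) (hY : Y = fun ω => X ω - (μ[X|m]) ω) :
    ∫ ω in {ω | 3 * ε < |Y ω|}, |X ω| ^ p ∂μ
      ≤ 2 * ∫ ω in {ω | ε < |X ω|}, |X ω| ^ p ∂μ := by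
  set X' : Ω → ℝ := hX.1.mk X with hX'def
  have hX'sm : StronglyMeasurable[m0] X' := hX.1.stronglyMeasurable_mk
  have hX'ae : X =ᵐ[μ] X' := hX.1.ae_eq_mk
  have hX'int : Integrable X' μ := hX.congr hX'ae
  set Z : Ω → ℝ := μ[X|m] with hZdef
  have hZsm : StronglyMeasurable[m] Z := stronglyMeasurable_condExp
  have hZsm0 : StronglyMeasurable[m0] Z := hZsm.mono hm
  have hZint : Integrable Z μ := integrable_condExp
  have hXg : (fun ω => |X ω| ^ p) =ᵐ[μ] fun ω => |X' ω| ^ p := by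
    filter_upwards [hX'ae] with ω h
    simp [h]
  have hg : Integrable (fun ω => |X' ω| ^ p) μ := hXp.congr hXg
  have hLHS : ∫ ω in {ω | 3 * ε < |Y ω|}, |X ω| ^ p ∂μ
      = ∫ ω in {ω | 3 * ε < |X' ω - Z ω|}, |X' ω| ^ p ∂μ := by
    have hsetA : {ω | 3 * ε < |Y ω|} =ᵐ[μ] {ω | 3 * ε < |X' ω - Z ω|} := by
      rw [eventuallyEq_set]
      filter_upwards [hX'ae] with ω h
      simp [hY, h]
    rw [Measure.restrict_congr_set hsetA]
    exact integral_congr_ae (ae_restrict_of_ae hXg)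
  have hRHS : ∫ ω in {ω | ε < |X ω|}, |X ω| ^ p ∂μ
      = ∫ ω in {ω | ε < |X' ω|}, |X' ω| ^ p ∂μ := by
    have hsetB : {ω | ε < |X ω|} =ᵐ[μ] {ω | ε < |X' ω|} := by
      rw [eventuallyEq_set]
      filter_upwards [hX'ae] with ω h
      simp [h]
    rw [Measure.restrict_congr_set hsetB]
    exact integral_congr_ae (ae_restrict_of_ae hXg)
  rw [hLHS, hRHS]
  refine @stmt1_aux Ω m0 μ _ X' Z hX'sm hZsm0 hX'int hZint p hp hg ε hε ?_
  -- the conditional expectation contraction on the m-measurable set C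
  have hCm : MeasurableSet[m] {ω | 2 * ε < |Z ω|} := by
    exact measurableSet_lt measurable_const hZsm.measurable.abs
  calc ∫ ω in {ω | 2 * ε < |Z ω|}, |Z ω| ∂μ
      ≤ ∫ ω in {ω | 2 * ε < |Z ω|}, |X ω| ∂μ := setIntegral_abs_condExp_le hCm X
    _ = ∫ ω in {ω | 2 * ε < |Z ω|}, |X' ω| ∂μ := by
        apply integral_congr_ae (ae_restrict_of_ae _)
        filter_upwards [hX'ae] with ω h
        rw [h]
end

section
/- Let X be a real-valued integrable random variable, F a sub-σ-algebra, Y = X − E(X|F), p ≥ 1 and ε > 0. Then E(|Y|^p · 1_{|Y| > 4ε}) ≤ 3 · 2^p · E(|X|^p · 1_{|X| > ε}). -/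
open MeasureTheory ProbabilityTheory Filter

private lemma tangent_le {p : ℝ} (hp : 1 ≤ p) {a b : ℝ} (ha : 0 ≤ a) (hb : 0 ≤ b) :
    b ^ p + p * b ^ (p - 1) * (a - b) ≤ a ^ p := by
  rcases hb.eq_or_lt with rfl | hb
  · rcases hp.eq_or_lt with rfl | hp1
    · simp [Real.rpow_one]
    · rw [Real.zero_rpow (by linarith : p ≠ 0), Real.zero_rpow (by intro h; apply absurd hp1; simp [show p = 1 by linarith] : p - 1 ≠ 0)]
      simpa using Real.rpow_nonneg ha p
  · have hs : -1 ≤ a / b - 1 := by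
      have : 0 ≤ a / b := div_nonneg ha hb.le
      linarith
    have hB := one_add_mul_self_le_rpow_one_add hs hp
    have hbp : 0 < b ^ p := Real.rpow_pos_of_pos hb p
    have h1 : 1 + (a / b - 1) = a / b := by ring
    rw [h1] at hB
    have h2 : b ^ p * (1 + p * (a / b - 1)) ≤ b ^ p * (a / b) ^ p :=
      mul_le_mul_of_nonneg_left hB hbp.le
    have h3 : (a / b) ^ p = a ^ p / b ^ p := Real.div_rpow ha hb.le p
    have h4 : b ^ (p - 1) = b ^ p / b := by
      rw [Real.rpow_sub hb, Real.rpow_one]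
    calc b ^ p + p * b ^ (p - 1) * (a - b)
        = b ^ p * (1 + p * (a / b - 1)) := by rw [h4]; field_simp
      _ ≤ b ^ p * (a / b) ^ p := h2
      _ = a ^ p := by rw [h3]; field_simp

private lemma condexp_jensen_rpow {Ω : Type*} {m m0 : MeasurableSpace Ω} (hm : m ≤ m0)
    (μ : Measure Ω) [IsProbabilityMeasure μ] {X : Ω → ℝ} (hX : Integrable X μ)
    {p : ℝ} (hp : 1 ≤ p) (hXp : Integrable (fun ω => |X ω| ^ p) μ) :
    ∀ᵐ ω ∂μ, |(μ[X|m]) ω| ^ p ≤ (μ[(fun ω => |X ω| ^ p)|m]) ω := by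
  have hp0 : (0:ℝ) ≤ p := by linarith
  have hp1 : (0:ℝ) ≤ p - 1 := by linarith
  have hXabs : Integrable (fun ω => |X ω|) μ := hX.abs
  set W : Ω → ℝ := μ[(fun ω => |X ω|)|m] with hWdef
  set V : Ω → ℝ := μ[(fun ω => |X ω| ^ p)|m] with hVdef
  have h1 : (μ[X|m]) ≤ᵐ[μ] W :=
    condExp_mono hX hXabs (Eventually.of_forall fun ω => le_abs_self _)
  have h1' : ∀ᵐ ω ∂μ, -(W ω) ≤ (μ[X|m]) ω := by
    have hneg : μ[-X|m] =ᵐ[μ] -(μ[X|m]) := condExp_neg X m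
    have h2 : (μ[-X|m]) ≤ᵐ[μ] W :=
      condExp_mono hX.neg hXabs (Eventually.of_forall fun ω => neg_le_abs _)
    filter_upwards [hneg, h2] with ω hω h2ω
    rw [Pi.neg_apply] at hω
    rw [hω] at h2ω
    linarith
  have h2 : 0 ≤ᵐ[μ] W :=
    condExp_nonneg (Eventually.of_forall fun ω => abs_nonneg _)
  have h3 : ∀ᵐ ω ∂μ, ∀ q : ℚ, 0 ≤ (q:ℝ) →
      (q:ℝ) ^ p + p * (q:ℝ) ^ (p-1) * (W ω - q) ≤ V ω := by
    rw [ae_all_iff]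
    intro q
    by_cases hq : 0 ≤ (q:ℝ)
    swap
    · exact Eventually.of_forall fun ω h => absurd h hq
    set c : ℝ := (q:ℝ) ^ p - p * (q:ℝ) ^ (p-1) * q with hc
    set d : ℝ := p * (q:ℝ) ^ (p-1) with hd
    have hfint : Integrable (fun ω => c + d * |X ω|) μ :=
      (integrable_const c).add (hXabs.const_mul d)
    have hmono : (μ[(fun ω => c + d * |X ω|)|m]) ≤ᵐ[μ] V := by
      refine condExp_mono hfint hXp (Eventually.of_forall fun ω => ?_)
      have := tangent_le hp (abs_nonneg (X ω)) hq
      simp only [hc, hd]; linarith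
    have heq : (μ[(fun ω => c + d * |X ω|)|m]) =ᵐ[μ] fun ω => c + d * W ω := by
      have hadd : (μ[(fun ω => c + d * |X ω|)|m]) =ᵐ[μ]
          (μ[(fun _ => c)|m]) + (μ[(fun ω => d * |X ω|)|m]) :=
        condExp_add (μ := μ) (m := m) (integrable_const c) (hXabs.const_mul d)
      have hconst : (μ[(fun _ => (c:ℝ))|m]) = fun _ => c := condExp_const hm c
      have hsmul : (μ[(fun ω => d * |X ω|)|m]) =ᵐ[μ] fun ω => d * W ω := by
        have h := condExp_smul (μ := μ) (m := m) (d : ℝ) (fun ω => |X ω|)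
        have h' : (fun ω => d * |X ω|) = d • (fun ω => |X ω|) := by
          funext ω; simp [smul_eq_mul]
        rw [h']
        filter_upwards [h] with ω hω
        rw [hω, hWdef, Pi.smul_apply, smul_eq_mul]
      filter_upwards [hadd, hsmul] with ω hω hsω
      simp only [Pi.add_apply] at hω
      rw [hω, hconst, hsω]
    filter_upwards [heq.symm.trans_le hmono] with ω hω
    intro _
    have hce : (q:ℝ) ^ p + d * (W ω - q) = c + d * W ω := by rw [hc]; ring
    have hω' : c + d * W ω ≤ V ω := hω
    linarith
  filter_upwards [h1, h1', h2, h3] with ω hZW hWZ hW0 htan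
  set t := W ω with ht
  have habs : |(μ[X|m]) ω| ≤ t := abs_le.mpr ⟨hWZ, hZW⟩
  have hstep : |(μ[X|m]) ω| ^ p ≤ t ^ p := Real.rpow_le_rpow (abs_nonneg _) habs hp0
  refine hstep.trans (le_of_forall_pos_le_add fun η hη => ?_)
  set C : ℝ := p * (t + 1) ^ (p - 1) with hC
  have hC0 : 0 ≤ C := mul_nonneg (by linarith) (Real.rpow_nonneg (by linarith) _)
  set δ : ℝ := min 1 (η / (C + 1)) with hδdef
  have hδ : 0 < δ := lt_min one_pos (div_pos hη (by linarith))
  obtain ⟨q, hq1, hq2⟩ := exists_rat_btwn (lt_add_of_pos_right t hδ)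
  have hq0 : (0:ℝ) ≤ q := le_of_lt (lt_of_le_of_lt hW0 hq1)
  have hqt1 : (q:ℝ) ≤ t + 1 := by
    have : δ ≤ 1 := min_le_left _ _
    linarith
  have htan' := htan q hq0
  have h5 : t ^ p ≤ (q:ℝ) ^ p := Real.rpow_le_rpow hW0 hq1.le hp0
  have h6 : p * (q:ℝ) ^ (p-1) * ((q:ℝ) - t) ≤ C * δ := by
    have hqp : (q:ℝ) ^ (p-1) ≤ (t+1) ^ (p-1) := Real.rpow_le_rpow hq0 hqt1 hp1
    have hqt : (q:ℝ) - t ≤ δ := by linarith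
    have h0 : 0 ≤ (q:ℝ) - t := by linarith
    calc p * (q:ℝ) ^ (p-1) * ((q:ℝ) - t) ≤ p * (t+1) ^ (p-1) * δ := by
          apply mul_le_mul (mul_le_mul_of_nonneg_left hqp (by linarith)) hqt h0
          positivity
      _ = C * δ := rfl
  have h7 : C * δ ≤ η := by
    have hmin : δ ≤ η / (C + 1) := min_le_right _ _
    have : C * (η / (C + 1)) ≤ η := by
      rw [mul_div_assoc']
      apply div_le_of_le_mul₀ (by linarith) (by linarith)
      nlinarith
    calc C * δ ≤ C * (η / (C + 1)) := mul_le_mul_of_nonneg_left hmin hC0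
      _ ≤ η := this
  nlinarith [htan']

private lemma setIntegral_abs_rpow_congr {Ω : Type*} {m0 : MeasurableSpace Ω}
    {μ : Measure Ω} {f g : Ω → ℝ} (h : f =ᵐ[μ] g) (c p : ℝ) :
    ∫ ω in {ω | c < |f ω|}, |f ω| ^ p ∂μ = ∫ ω in {ω | c < |g ω|}, |g ω| ^ p ∂μ := by
  have hset : {ω | c < |f ω|} =ᵐ[μ] ({ω | c < |g ω|} : Set Ω) := by
    rw [Filter.eventuallyEq_set]
    filter_upwards [h] with ω hω
    simp [Set.mem_setOf_eq, hω]
  calc ∫ ω in {ω | c < |f ω|}, |f ω| ^ p ∂μ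
      = ∫ ω in {ω | c < |f ω|}, |g ω| ^ p ∂μ := by
        refine integral_congr_ae (ae_restrict_of_ae ?_)
        filter_upwards [h] with ω hω
        rw [hω]
    _ = ∫ ω in {ω | c < |g ω|}, |g ω| ^ p ∂μ := by
        rw [Measure.restrict_congr_set hset]

private lemma measSet_const_lt_abs {Ω : Type*} [mΩ : MeasurableSpace Ω] {f : Ω → ℝ}
    (hf : StronglyMeasurable f) (c : ℝ) : MeasurableSet {ω | c < |f ω|} :=
  measurableSet_lt measurable_const hf.measurable.abs

private lemma sm_abs_rpow {Ω : Type*} [mΩ : MeasurableSpace Ω] {f : Ω → ℝ}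
    (hf : StronglyMeasurable f) {p : ℝ} (hp : 0 ≤ p) :
    StronglyMeasurable fun ω => |f ω| ^ p :=
  (Real.continuous_rpow_const hp).comp_stronglyMeasurable (continuous_abs.comp_stronglyMeasurable hf)

private lemma abs_condexp_le' {Ω : Type*} {m m0 : MeasurableSpace Ω} (μ : Measure Ω)
    [IsProbabilityMeasure μ] {X : Ω → ℝ} (hX : Integrable X μ) :
    ∀ᵐ ω ∂μ, |(μ[X|m]) ω| ≤ (μ[(fun ω => |X ω|)|m]) ω := by
  have hXabs : Integrable (fun ω => |X ω|) μ := hX.abs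
  have h1 : (μ[X|m]) ≤ᵐ[μ] (μ[(fun ω => |X ω|)|m]) :=
    condExp_mono hX hXabs (Filter.Eventually.of_forall fun ω => le_abs_self _)
  have hneg : μ[-X|m] =ᵐ[μ] -(μ[X|m]) := condExp_neg X m
  have h2 : (μ[-X|m]) ≤ᵐ[μ] (μ[(fun ω => |X ω|)|m]) :=
    condExp_mono hX.neg hXabs (Filter.Eventually.of_forall fun ω => neg_le_abs _)
  filter_upwards [h1, hneg, h2] with ω hω hnω h2ω
  rw [Pi.neg_apply] at hnω
  rw [hnω] at h2ω
  rw [abs_le]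
  constructor <;> linarith

private lemma aux_main {Ω : Type*} (m : MeasurableSpace Ω) {m0 : MeasurableSpace Ω}
    (hm : m ≤ m0) (μ : Measure Ω) [IsProbabilityMeasure μ] (X : Ω → ℝ)
    (hXm : StronglyMeasurable[m0] X) (hX : Integrable X μ)
    (p : ℝ) (hp : 1 ≤ p) (hXp : Integrable (fun ω => |X ω| ^ p) μ)
    (ε : ℝ) (hε : 0 < ε) :
    ∫ ω in {ω | 4 * ε < |X ω - (μ[X|m]) ω|}, |X ω - (μ[X|m]) ω| ^ p ∂μ
      ≤ 3 * 2 ^ p * ∫ ω in {ω | ε < |X ω|}, |X ω| ^ p ∂μ := by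
  have hp0 : (0:ℝ) ≤ p := by linarith
  have hp1 : (0:ℝ) ≤ p - 1 := by linarith
  set Z : Ω → ℝ := μ[X|m] with hZdef
  have hZm : StronglyMeasurable[m] Z := stronglyMeasurable_condExp
  have hZm0 : StronglyMeasurable[m0] Z := hZm.mono hm
  set Y : Ω → ℝ := fun ω => X ω - Z ω with hYdef
  have hYm : StronglyMeasurable[m0] Y := hXm.sub hZm0
  set fX : Ω → ℝ := fun ω => |X ω| ^ p with hfX
  set fZ : Ω → ℝ := fun ω => |Z ω| ^ p with hfZ
  set S : Set Ω := {ω | 4 * ε < |Y ω|} with hS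
  set A : Set Ω := {ω | ε < |X ω|} with hA
  set A2 : Set Ω := {ω | 2 * ε < |X ω|} with hA2
  set B : Set Ω := {ω | 2 * ε < |Z ω|} with hB
  have hSm : MeasurableSet[m0] S := measSet_const_lt_abs (mΩ := m0) hYm _
  have hAm : MeasurableSet[m0] A := measSet_const_lt_abs (mΩ := m0) hXm _
  have hA2m : MeasurableSet[m0] A2 := measSet_const_lt_abs (mΩ := m0) hXm _
  have hBm : MeasurableSet[m] B := measSet_const_lt_abs (mΩ := m) hZm _
  have hBm0 : MeasurableSet[m0] B := hm _ hBm
  set I : ℝ := ∫ ω in A, fX ω ∂μ with hI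
  -- Jensen
  have hjensen : ∀ᵐ ω ∂μ, fZ ω ≤ (μ[fX|m]) ω := condexp_jensen_rpow hm μ hX hp hXp
  have hVint : Integrable (μ[fX|m]) μ := integrable_condExp
  have hfZmeas : AEStronglyMeasurable fZ μ := (sm_abs_rpow (mΩ := m0) hZm0 hp0).aestronglyMeasurable
  have hfZint : Integrable fZ μ := by
    refine hVint.mono hfZmeas ?_
    filter_upwards [hjensen] with ω hω
    rw [Real.norm_eq_abs, abs_of_nonneg (Real.rpow_nonneg (abs_nonneg _) _)]
    exact hω.trans (le_abs_self _)
  -- pointwise key inequality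
  have key : ∀ ω, S.indicator (fun ω => |Y ω| ^ p) ω
      ≤ 2 ^ p * (A2.indicator fX ω + B.indicator fZ ω) := by
    intro ω
    have hnnX : 0 ≤ A2.indicator fX ω :=
      Set.indicator_nonneg (fun _ _ => Real.rpow_nonneg (abs_nonneg _) _) _
    have hnnZ : 0 ≤ B.indicator fZ ω :=
      Set.indicator_nonneg (fun _ _ => Real.rpow_nonneg (abs_nonneg _) _) _
    have h2p : (0:ℝ) ≤ 2 ^ p := Real.rpow_nonneg (by norm_num) _
    by_cases hω : ω ∈ S
    · rw [Set.indicator_of_mem hω]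
      have h4 : 4 * ε < |Y ω| := hω
      have hYle : |Y ω| ≤ |X ω| + |Z ω| := by
        rw [hYdef]
        exact abs_sub (X ω) (Z ω)
      rcases le_total (|Z ω|) (|X ω|) with hc | hc
      · have hX2 : 2 * ε < |X ω| := by linarith
        have hle : |Y ω| ≤ 2 * |X ω| := by linarith
        have h5 : |Y ω| ^ p ≤ (2 * |X ω|) ^ p :=
          Real.rpow_le_rpow (abs_nonneg _) hle hp0
        rw [Real.mul_rpow (by norm_num) (abs_nonneg _)] at h5
        have hmem : ω ∈ A2 := hX2
        rw [Set.indicator_of_mem hmem]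
        calc |Y ω| ^ p ≤ 2 ^ p * |X ω| ^ p := h5
          _ ≤ 2 ^ p * (fX ω + B.indicator fZ ω) := by
              exact mul_le_mul_of_nonneg_left (le_add_of_nonneg_right hnnZ) h2p
      · have hZ2 : 2 * ε < |Z ω| := by linarith
        have hle : |Y ω| ≤ 2 * |Z ω| := by linarith
        have h5 : |Y ω| ^ p ≤ (2 * |Z ω|) ^ p :=
          Real.rpow_le_rpow (abs_nonneg _) hle hp0
        rw [Real.mul_rpow (by norm_num) (abs_nonneg _)] at h5
        have hmem : ω ∈ B := hZ2
        rw [Set.indicator_of_mem hmem]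
        calc |Y ω| ^ p ≤ 2 ^ p * |Z ω| ^ p := h5
          _ ≤ 2 ^ p * (A2.indicator fX ω + fZ ω) := by
              exact mul_le_mul_of_nonneg_left (le_add_of_nonneg_left hnnX) h2p
    · rw [Set.indicator_of_notMem hω]
      positivity
  have hRHSint : Integrable (fun ω => 2 ^ p * (A2.indicator fX ω + B.indicator fZ ω)) μ :=
    ((hXp.indicator hA2m).add (hfZint.indicator hBm0)).const_mul _
  have hAsub : A2 ⊆ A := by
    intro ω hω
    have h1 : 2 * ε < |X ω| := hω
    have : ε < |X ω| := by linarith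
    exact this
  have hstep1 : ∫ ω in A2, fX ω ∂μ ≤ I := by
    rw [hI]
    refine setIntegral_mono_set hXp.integrableOn ?_ (HasSubset.Subset.eventuallyLE hAsub)
    exact Eventually.of_forall fun ω => Real.rpow_nonneg (abs_nonneg _) _
  have hXabs : Integrable (fun ω => |X ω|) μ := hX.abs
  have habsZ : ∀ᵐ ω ∂μ, |Z ω| ≤ (μ[(fun ω => |X ω|)|m]) ω := abs_condexp_le' μ hX
  -- step (iii)
  set g2 : Ω → ℝ := A.indicator (fun ω => |X ω|) with hg2
  have hg2int : Integrable g2 μ := hXabs.indicator hAm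
  have hg1int : Integrable (Aᶜ.indicator (fun ω => |X ω|)) μ := hXabs.indicator hAm.compl
  have hsplit : (fun ω => |X ω|) = fun ω => Aᶜ.indicator (fun ω => |X ω|) ω + g2 ω := by
    funext ω
    by_cases hω : ω ∈ A
    · rw [hg2, Set.indicator_of_mem hω, Set.indicator_of_notMem (by simpa using hω)]
      ring
    · rw [hg2, Set.indicator_of_notMem hω, Set.indicator_of_mem (by simpa using hω)]
      ring
  have hWle : ∀ᵐ ω ∂μ, (μ[(fun ω => |X ω|)|m]) ω ≤ ε + (μ[g2|m]) ω := by
    have hadd : (μ[(fun ω => |X ω|)|m]) =ᵐ[μ]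
        (μ[Aᶜ.indicator (fun ω => |X ω|)|m]) + (μ[g2|m]) := by
      nth_rewrite 1 [hsplit]
      exact condExp_add hg1int hg2int m
    have hg1le : (μ[Aᶜ.indicator (fun ω => |X ω|)|m]) ≤ᵐ[μ] fun _ => ε := by
      have hmono := condExp_mono (μ := μ) (m := m) hg1int (integrable_const ε)
        (Eventually.of_forall fun ω => ?_)
      · have hconst : (μ[(fun _ => (ε:ℝ))|m]) = fun _ => ε := condExp_const hm ε
        rwa [hconst] at hmono
      · by_cases hω : ω ∈ A
        · rw [Set.indicator_of_notMem (by simpa using hω)]; exact hε.le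
        · rw [Set.indicator_of_mem (by simpa using hω)]
          exact le_of_not_gt hω
    filter_upwards [hadd, hg1le] with ω h1 h2
    rw [h1, Pi.add_apply]
    linarith
  have hBbound : ∀ᵐ ω ∂μ, ω ∈ B → ε ≤ (μ[g2|m]) ω := by
    filter_upwards [habsZ, hWle] with ω h1 h2 hω
    have h3 : 2 * ε < |Z ω| := hω
    linarith
  have hεB : ε * (μ B).toReal ≤ ∫ ω in A, |X ω| ∂μ := by
    have e1 : ε * (μ B).toReal = ∫ _ in B, ε ∂μ := by
      rw [setIntegral_const, smul_eq_mul]; simp only [Measure.real]; ring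
    rw [e1]
    calc ∫ _ in B, ε ∂μ ≤ ∫ ω in B, (μ[g2|m]) ω ∂μ := by
          refine setIntegral_mono_ae_restrict (integrable_const ε).integrableOn
            integrable_condExp.integrableOn ?_
          exact (ae_restrict_iff' hBm0).mpr hBbound
      _ = ∫ ω in B, g2 ω ∂μ := setIntegral_condExp hm hg2int hBm
      _ ≤ ∫ ω, g2 ω ∂μ := setIntegral_le_integral hg2int
          (Eventually.of_forall fun ω => Set.indicator_nonneg (fun _ _ => abs_nonneg _) _)
      _ = ∫ ω in A, |X ω| ∂μ := by rw [hg2, integral_indicator hAm]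
  have hd2 : ε ^ (p-1) * ∫ ω in A, |X ω| ∂μ ≤ I := by
    rw [hI, ← integral_const_mul]
    refine setIntegral_mono_on (hXabs.const_mul _).integrableOn hXp.integrableOn hAm
      fun ω hω => ?_
    have hx : ε < |X ω| := hω
    have h1 : ε ^ (p-1) ≤ |X ω| ^ (p-1) := Real.rpow_le_rpow hε.le hx.le hp1
    have h2 : |X ω| ^ p = |X ω| ^ (p-1) * |X ω| := by
      have hne : |X ω| ≠ 0 := ne_of_gt (lt_trans hε hx)
      have h := Real.rpow_add_one hne (p-1)
      rw [sub_add_cancel] at h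
      exact h
    show ε ^ (p-1) * |X ω| ≤ |X ω| ^ p
    rw [h2]
    exact mul_le_mul_of_nonneg_right h1 (abs_nonneg _)
  have hc3 : ε ^ p * (μ B).toReal ≤ I := by
    have hεp : ε ^ p = ε ^ (p-1) * ε := by
      have h := Real.rpow_add_one hε.ne' (p-1)
      rw [sub_add_cancel] at h
      exact h
    calc ε ^ p * (μ B).toReal = ε ^ (p-1) * (ε * (μ B).toReal) := by rw [hεp]; ring
      _ ≤ ε ^ (p-1) * ∫ ω in A, |X ω| ∂μ :=
          mul_le_mul_of_nonneg_left hεB (Real.rpow_nonneg hε.le _)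
      _ ≤ I := hd2
  have hc2 : ∫ ω in B, fX ω ∂μ ≤ I + ε ^ p * (μ B).toReal := by
    have hpt : ∀ ω, fX ω ≤ A.indicator fX ω + ε ^ p := by
      intro ω
      by_cases hω : ω ∈ A
      · rw [Set.indicator_of_mem hω]
        have := Real.rpow_nonneg hε.le p
        linarith
      · rw [Set.indicator_of_notMem hω]
        have hx : |X ω| ≤ ε := le_of_not_gt hω
        have h1 : |X ω| ^ p ≤ ε ^ p := Real.rpow_le_rpow (abs_nonneg _) hx hp0
        show |X ω| ^ p ≤ 0 + ε ^ p
        linarith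
    calc ∫ ω in B, fX ω ∂μ ≤ ∫ ω in B, (A.indicator fX ω + ε ^ p) ∂μ :=
          setIntegral_mono_on hXp.integrableOn
            ((hXp.indicator hAm).add (integrable_const _)).integrableOn hBm0
            (fun ω _ => hpt ω)
      _ = (∫ ω in B, A.indicator fX ω ∂μ) + ∫ _ in B, ε ^ p ∂μ :=
          integral_add (hXp.indicator hAm).integrableOn (integrable_const _).integrableOn
      _ ≤ I + ε ^ p * (μ B).toReal := by
          refine add_le_add ?_ ?_
          · calc ∫ ω in B, A.indicator fX ω ∂μ ≤ ∫ ω, A.indicator fX ω ∂μ :=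
                  setIntegral_le_integral (hXp.indicator hAm)
                    (Eventually.of_forall fun ω => Set.indicator_nonneg
                      (fun _ _ => Real.rpow_nonneg (abs_nonneg _) _) _)
              _ = I := by rw [hI, integral_indicator hAm]
          · rw [setIntegral_const, smul_eq_mul]
            ring_nf
            exact le_of_eq (by simp only [Measure.real]; ring)
  have hc1 : ∫ ω in B, fZ ω ∂μ ≤ ∫ ω in B, fX ω ∂μ := by
    calc ∫ ω in B, fZ ω ∂μ ≤ ∫ ω in B, (μ[fX|m]) ω ∂μ :=
          setIntegral_mono_ae hfZint.integrableOn integrable_condExp.integrableOn hjensen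
      _ = ∫ ω in B, fX ω ∂μ := setIntegral_condExp hm hXp hBm
  have hstep2 : ∫ ω in B, fZ ω ∂μ ≤ 2 * I := by linarith
  have hfinal : ∫ ω in S, |Y ω| ^ p ∂μ
      ≤ 2 ^ p * ((∫ ω in A2, fX ω ∂μ) + ∫ ω in B, fZ ω ∂μ) := by
    rw [← integral_indicator hSm]
    calc ∫ ω, S.indicator (fun ω => |Y ω| ^ p) ω ∂μ
        ≤ ∫ ω, 2 ^ p * (A2.indicator fX ω + B.indicator fZ ω) ∂μ :=
          integral_mono_of_nonneg
            (Eventually.of_forall fun ω => Set.indicator_nonneg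
              (fun _ _ => Real.rpow_nonneg (abs_nonneg _) _) _)
            hRHSint (Eventually.of_forall key)
      _ = 2 ^ p * ∫ ω, (A2.indicator fX ω + B.indicator fZ ω) ∂μ := integral_const_mul _ _
      _ = 2 ^ p * ((∫ ω, A2.indicator fX ω ∂μ) + ∫ ω, B.indicator fZ ω ∂μ) := by
          rw [integral_add (hXp.indicator hA2m) (hfZint.indicator hBm0)]
      _ = 2 ^ p * ((∫ ω in A2, fX ω ∂μ) + ∫ ω in B, fZ ω ∂μ) := by
          rw [integral_indicator hA2m, integral_indicator hBm0]
  have h2p : (0:ℝ) ≤ 2 ^ p := Real.rpow_nonneg (by norm_num) _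
  show ∫ ω in S, |Y ω| ^ p ∂μ ≤ 3 * 2 ^ p * I
  calc ∫ ω in S, |Y ω| ^ p ∂μ
      ≤ 2 ^ p * ((∫ ω in A2, fX ω ∂μ) + ∫ ω in B, fZ ω ∂μ) := hfinal
    _ ≤ 2 ^ p * (I + 2 * I) := mul_le_mul_of_nonneg_left (add_le_add hstep1 hstep2) h2p
    _ = 3 * 2 ^ p * I := by ring


/-- Lemma "curiouslma", third inequality: with `Y = X − E(X|F)`,
`E(|Y|^p · 1_{|Y| > 4ε}) ≤ 3 · 2^p · E(|X|^p · 1_{|X| > ε})`. -/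
theorem stmt2 {Ω : Type*} {m0 : MeasurableSpace Ω} (μ : Measure Ω) [IsProbabilityMeasure μ]
    (m : MeasurableSpace Ω) (hm : m ≤ m0) (X : Ω → ℝ) (hX : Integrable X μ)
    (p : ℝ) (hp : 1 ≤ p) (hXp : Integrable (fun ω => |X ω| ^ p) μ)
    (ε : ℝ) (hε : 0 < ε)
    (Y : Ω → ℝ) (hY : Y = fun ω => X ω - (μ[X|m]) ω) :
    ∫ ω in {ω | 4 * ε < |Y ω|}, |Y ω| ^ p ∂μ
      ≤ 3 * 2 ^ p * ∫ ω in {ω | ε < |X ω|}, |X ω| ^ p ∂μ := by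
  subst hY
  have haesm := hX.1
  set X' : Ω → ℝ := haesm.mk X with hX'def
  have hX'sm : StronglyMeasurable[m0] X' := haesm.stronglyMeasurable_mk
  have hae : X =ᵐ[μ] X' := haesm.ae_eq_mk
  have hX' : Integrable X' μ := hX.congr hae
  have hXp' : Integrable (fun ω => |X' ω| ^ p) μ := by
    refine hXp.congr ?_
    filter_upwards [hae] with ω h
    rw [h]
  have hYae : (fun ω => X ω - (μ[X|m]) ω) =ᵐ[μ] fun ω => X' ω - (μ[X'|m]) ω := by
    filter_upwards [hae, condExp_congr_ae (m := m) hae] with ω h1 h2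
    rw [h1, h2]
  have hL : ∫ ω in {ω | 4 * ε < |X ω - (μ[X|m]) ω|}, |X ω - (μ[X|m]) ω| ^ p ∂μ
      = ∫ ω in {ω | 4 * ε < |X' ω - (μ[X'|m]) ω|}, |X' ω - (μ[X'|m]) ω| ^ p ∂μ :=
    setIntegral_abs_rpow_congr hYae _ p
  have hR : ∫ ω in {ω | ε < |X ω|}, |X ω| ^ p ∂μ
      = ∫ ω in {ω | ε < |X' ω|}, |X' ω| ^ p ∂μ :=
    setIntegral_abs_rpow_congr hae _ p
  show ∫ ω in {ω | 4 * ε < |X ω - (μ[X|m]) ω|}, |X ω - (μ[X|m]) ω| ^ p ∂μ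
      ≤ 3 * 2 ^ p * ∫ ω in {ω | ε < |X ω|}, |X ω| ^ p ∂μ
  rw [hL, hR]
  exact aux_main m hm μ X' hX'sm hX' p hp hXp' ε hε
end

section
/- Let X be a real-valued integrable random variable and F a sub-σ-algebra. Then for ε > 0, the event {|E(X|F)| > 2ε} is contained (up to a null set) in the event {|E(X·1_{|X|>ε} | F)| > ε}, and consequently ε^p · 1_{|E(X|F)| > 2ε} ≤ E(|X|^p · 1_{|X| > ε} | F) almost surely for any p ≥ 1. -/
open MeasureTheory ProbabilityTheory Filter

lemma aux_abs_condexp_le {Ω : Type*} {m0 : MeasurableSpace Ω} {μ : Measure Ω}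
    {m : MeasurableSpace Ω} (f : Ω → ℝ) (hf : Integrable f μ) :
    ∀ᵐ ω ∂μ, |(μ[f|m]) ω| ≤ (μ[(fun ω => |f ω|)|m]) ω := by
  filter_upwards [condExp_mono hf hf.abs
      (ae_of_all μ (fun x => le_abs_self (f x))),
    EventuallyLE.trans (condExp_neg f m).symm.le
      (condExp_mono hf.neg hf.abs (ae_of_all μ (fun x => neg_le_abs (f x))))] with x hx₁ hx₂
  exact abs_le.2 ⟨neg_le.1 hx₂, hx₁⟩


lemma aux_aesm {Ω : Type*} [MeasurableSpace Ω] {μ : Measure Ω} (X : Ω → ℝ)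
    (hX : AEStronglyMeasurable X μ) (ε p : ℝ) :
    AEStronglyMeasurable (({ω' | ε < |X ω'|}).indicator X) μ ∧
    AEStronglyMeasurable (({ω' | ε < |X ω'|}).indicator fun ω => |X ω| ^ p) μ := by
  obtain ⟨X', hX'sm, hXX'⟩ := hX
  have hs' : MeasurableSet {ω' | ε < |X' ω'|} := hX'sm.measurable.abs measurableSet_Ioi
  constructor
  · refine ⟨({ω' | ε < |X' ω'|}).indicator X', hX'sm.indicator hs', ?_⟩
    filter_upwards [hXX'] with ω hω
    simp only [Set.indicator_apply, Set.mem_setOf_eq, hω]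
  · refine ⟨({ω' | ε < |X' ω'|}).indicator fun ω => |X' ω| ^ p,
      ((hX'sm.measurable.abs.pow_const p).stronglyMeasurable).indicator hs', ?_⟩
    filter_upwards [hXX'] with ω hω
    simp only [Set.indicator_apply, Set.mem_setOf_eq, hω]

/-- The event `{|E(X|F)| > 2ε}` is a.s. contained in `{|E(X·1_{|X|>ε}|F)| > ε}`, and
consequently `ε^p · 1_{|E(X|F)| > 2ε} ≤ E(|X|^p · 1_{|X| > ε} | F)` a.s. for `p ≥ 1`. -/
theorem stmt4 {Ω : Type*} {m0 : MeasurableSpace Ω} (μ : Measure Ω) [IsProbabilityMeasure μ]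
    (m : MeasurableSpace Ω) (hm : m ≤ m0) (X : Ω → ℝ) (hX : Integrable X μ)
    (p : ℝ) (hp : 1 ≤ p) (hXp : Integrable (fun ω => |X ω| ^ p) μ)
    (ε : ℝ) (hε : 0 < ε) :
    (∀ᵐ ω ∂μ, 2 * ε < |(μ[X|m]) ω| →
        ε < |(μ[Set.indicator {ω' | ε < |X ω'|} X|m]) ω|)
    ∧ ∀ᵐ ω ∂μ,
        ε ^ p * Set.indicator {ω' | 2 * ε < |(μ[X|m]) ω'|} (fun _ => (1 : ℝ)) ω
          ≤ (μ[Set.indicator {ω' | ε < |X ω'|} (fun ω' => |X ω'| ^ p)|m]) ω := by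
  set A : Set Ω := {ω' | ε < |X ω'|} with hA
  have hind_aesm := (@aux_aesm Ω m0 μ X hX.1 ε p).1
  have hindp_aesm := (@aux_aesm Ω m0 μ X hX.1 ε p).2
  have hAf : Integrable (A.indicator X) μ :=
    hX.mono hind_aesm (ae_of_all _ fun ω => norm_indicator_le_norm_self X ω)
  have hAp : Integrable (A.indicator fun ω => |X ω| ^ p) μ :=
    hXp.mono hindp_aesm (ae_of_all _ fun ω => norm_indicator_le_norm_self _ ω)
  set g : Ω → ℝ := fun ω => X ω - A.indicator X ω with hg
  have hgint : Integrable g μ := hX.sub hAf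
  have hgbd : ∀ ω, |g ω| ≤ ε := by
    intro ω
    by_cases hω : ω ∈ A
    · simp [hg, Set.indicator_of_mem hω]; positivity
    · simp only [hg, Set.indicator_of_notMem hω, sub_zero]
      exact le_of_not_gt (by simpa [hA] using hω)
  have habs : ∀ ω, |A.indicator X ω| = A.indicator (fun ω => |X ω|) ω := by
    intro ω; by_cases hω : ω ∈ A <;>
      simp [Set.indicator_of_mem, Set.indicator_of_notMem, hω]
  have hAabs : Integrable (A.indicator fun ω => |X ω|) μ := by
    have := hAf.abs
    simpa only [funext habs] using this
  -- E(g|m) bounded by ε a.e.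
  have hgce : ∀ᵐ ω ∂μ, |(μ[g|m]) ω| ≤ ε := by
    have h1 := aux_abs_condexp_le (m := m) g hgint
    have h2 : (μ[(fun ω => |g ω|)|m]) ≤ᵐ[μ] μ[(fun _ => ε)|m] :=
      condExp_mono hgint.abs (integrable_const ε) (ae_of_all _ hgbd)
    filter_upwards [h1, h2] with ω hω1 hω2
    calc |(μ[g|m]) ω| ≤ (μ[(fun ω => |g ω|)|m]) ω := hω1
      _ ≤ (μ[(fun _ => ε)|m]) ω := hω2
      _ = ε := by rw [condExp_const hm]
  -- decomposition
  have hdec : μ[X|m] =ᵐ[μ] μ[A.indicator X|m] + μ[g|m] := by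
    have : X = fun ω => A.indicator X ω + g ω := by funext ω; simp [hg]
    nth_rewrite 1 [this]
    exact condExp_add hAf hgint m
  have part1 : ∀ᵐ ω ∂μ, 2 * ε < |(μ[X|m]) ω| → ε < |(μ[A.indicator X|m]) ω| := by
    filter_upwards [hdec, hgce] with ω h1 h2 hlt
    have : |(μ[X|m]) ω| ≤ |(μ[A.indicator X|m]) ω| + |(μ[g|m]) ω| := by
      rw [h1]; exact abs_add_le _ _
    linarith
  refine ⟨part1, ?_⟩
  -- pointwise: ε^(p-1) * ind|X| ≤ ind |X|^p
  have hpw : ∀ ω, ε ^ (p - 1) * A.indicator (fun ω => |X ω|) ω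
      ≤ A.indicator (fun ω => |X ω| ^ p) ω := by
    intro ω
    by_cases hω : ω ∈ A
    · rw [Set.indicator_of_mem hω, Set.indicator_of_mem hω]
      have hXω : ε < |X ω| := hω
      have h1 : ε ^ (p - 1) ≤ |X ω| ^ (p - 1) :=
        Real.rpow_le_rpow hε.le hXω.le (by linarith)
      calc ε ^ (p - 1) * |X ω| ≤ |X ω| ^ (p - 1) * |X ω| :=
            mul_le_mul_of_nonneg_right h1 (abs_nonneg _)
        _ = |X ω| ^ p := by
            rw [← Real.rpow_add_one (ne_of_gt (lt_trans hε hXω)), sub_add_cancel]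
    · simp [Set.indicator_of_notMem hω]
  have hsmul : Integrable (fun ω => ε ^ (p - 1) * A.indicator (fun ω => |X ω|) ω) μ :=
    hAabs.const_mul _
  have hmono : (μ[(fun ω => ε ^ (p - 1) * A.indicator (fun ω => |X ω|) ω)|m])
      ≤ᵐ[μ] μ[A.indicator (fun ω => |X ω| ^ p)|m] :=
    condExp_mono hsmul hAp (ae_of_all _ hpw)
  have hce_smul : μ[(fun ω => ε ^ (p - 1) * A.indicator (fun ω => |X ω|) ω)|m]
      =ᵐ[μ] fun ω => ε ^ (p - 1) * (μ[A.indicator (fun ω => |X ω|)|m]) ω := by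
    have := condExp_smul (μ := μ) (m := m) (ε ^ (p - 1)) (A.indicator (fun ω => |X ω|))
    simpa [Pi.smul_def, smul_eq_mul] using this
  have hcx := aux_abs_condexp_le (m := m) (A.indicator X) hAf
  have hcx' : ∀ᵐ ω ∂μ, |(μ[A.indicator X|m]) ω| ≤ (μ[A.indicator (fun ω => |X ω|)|m]) ω := by
    have heq : (fun ω => |A.indicator X ω|) = A.indicator (fun ω => |X ω|) := funext habs
    simpa only [heq] using hcx
  have hnn : 0 ≤ᵐ[μ] μ[A.indicator (fun ω => |X ω| ^ p)|m] :=
    condExp_nonneg (ae_of_all _ fun ω =>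
      Set.indicator_nonneg (fun x _ => Real.rpow_nonneg (abs_nonneg _) p) ω)
  filter_upwards [part1, hmono, hce_smul, hcx', hnn] with ω h1 h2 h3 h4 h5
  by_cases hω : ω ∈ {ω' | 2 * ε < |(μ[X|m]) ω'|}
  · rw [Set.indicator_of_mem hω, mul_one]
    have hε1 : ε < |(μ[A.indicator X|m]) ω| := h1 hω
    have hεp1 : (0:ℝ) ≤ ε ^ (p - 1) := Real.rpow_nonneg hε.le _
    calc ε ^ p = ε ^ (p - 1) * ε := by
          rw [← Real.rpow_add_one hε.ne', sub_add_cancel]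
      _ ≤ ε ^ (p - 1) * (μ[A.indicator (fun ω => |X ω|)|m]) ω := by
          exact mul_le_mul_of_nonneg_left (le_trans hε1.le h4) hεp1
      _ = (μ[(fun ω => ε ^ (p - 1) * A.indicator (fun ω => |X ω|) ω)|m]) ω := h3.symm
      _ ≤ _ := h2
  · rw [Set.indicator_of_notMem hω, mul_zero]
    simpa using h5
end

section
/- Let (d_i)_{1 ≤ i ≤ m} be square-integrable random variables adapted to a filtration (G_i) with E(d_i | G_{i-1}) = 0 a.s. Then for any ε > 0, E|Σ_{i=1}^m d_i| ≤ (ε Σ_{i=1}^m E|d_i|)^{1/2} + 2 Σ_{i=1}^m E(|d_i| 1_{|d_i| > ε}). -/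
open MeasureTheory ProbabilityTheory Filter

section helpers

/-- Cauchy–Schwarz lite: `∫|f| ≤ sqrt (∫ f²)` on a probability space. -/
lemma my_abs_integral_le_sqrt {Ω : Type*} {m0 : MeasurableSpace Ω} {μ : Measure Ω}
    [IsProbabilityMeasure μ] {f : Ω → ℝ} (hf : MemLp f 2 μ) :
    ∫ ω, |f ω| ∂μ ≤ Real.sqrt (∫ ω, (f ω) ^ 2 ∂μ) := by
  set I : ℝ := ∫ ω, (f ω) ^ 2 ∂μ with hI
  have hI0 : 0 ≤ I := integral_nonneg fun ω => sq_nonneg _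
  have hfi : Integrable f μ := hf.integrable one_le_two
  have hsq : Integrable (fun ω => (f ω) ^ 2) μ := hf.integrable_sq
  set J : ℝ := ∫ ω, |f ω| ∂μ with hJ
  have hJ0 : 0 ≤ J := integral_nonneg fun ω => abs_nonneg _
  have key : ∀ t : ℝ, 0 < t → 2 * t * J ≤ t ^ 2 + I := by
    intro t ht
    have h1 : ∀ ω, 2 * t * |f ω| ≤ t ^ 2 + (f ω) ^ 2 := by
      intro ω
      nlinarith [sq_nonneg (|f ω| - t), sq_abs (f ω)]
    have h2 : ∫ ω, 2 * t * |f ω| ∂μ ≤ ∫ ω, (t ^ 2 + (f ω) ^ 2) ∂μ :=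
      integral_mono (hfi.abs.const_mul _) ((integrable_const _).add hsq) h1
    rw [integral_const_mul] at h2
    rwa [integral_add (integrable_const _) hsq, integral_const, probReal_univ,
      smul_eq_mul, one_mul] at h2
  have hJsq : J ^ 2 ≤ I := by
    rcases eq_or_lt_of_le hJ0 with h | h
    · nlinarith
    · have := key J h; nlinarith
  calc J = Real.sqrt (J ^ 2) := by rw [Real.sqrt_sq hJ0]
    _ ≤ Real.sqrt I := Real.sqrt_le_sqrt hJsq

/-- `∫ f·g = ∫ f·E[g|G']` when `f` is `G'`-measurable. -/
lemma my_integral_mul_condexp {Ω : Type*} {m0 : MeasurableSpace Ω} {μ : Measure Ω}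
    [IsProbabilityMeasure μ] {G' : MeasurableSpace Ω} (hG' : G' ≤ m0) {f g : Ω → ℝ}
    (hfm : StronglyMeasurable[G'] f) (hfg : Integrable (fun ω => f ω * g ω) μ)
    (hg : Integrable g μ) :
    ∫ ω, f ω * g ω ∂μ = ∫ ω, f ω * (μ[g|G']) ω ∂μ := by
  have h := condExp_mul_of_stronglyMeasurable_left (μ := μ) hfm hfg hg
  calc ∫ ω, f ω * g ω ∂μ = ∫ ω, (μ[fun ω => f ω * g ω|G']) ω ∂μ :=
        (integral_condExp hG').symm
    _ = ∫ ω, f ω * (μ[g|G']) ω ∂μ := integral_congr_ae (h.mono fun ω hω => hω)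

/-- Orthogonality: `∫ (Σ f_i)² = Σ ∫ f_i²` for bounded martingale differences. -/
lemma my_sq_sum_integral {Ω : Type*} {m0 : MeasurableSpace Ω} {μ : Measure Ω}
    [IsProbabilityMeasure μ] (G : ℕ → MeasurableSpace Ω) (hGmono : Monotone G)
    (hGle : ∀ i, G i ≤ m0) (f : ℕ → Ω → ℝ) (C : ℝ)
    (hfm : ∀ i, 1 ≤ i → StronglyMeasurable[G i] (f i))
    (hfb : ∀ i, 1 ≤ i → ∀ᵐ ω ∂μ, |f i ω| ≤ C)
    (hmart : ∀ i, 1 ≤ i → μ[f i|G (i - 1)] =ᵐ[μ] 0) (n : ℕ) :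
    ∫ ω, (∑ i ∈ Finset.Icc 1 n, f i ω) ^ 2 ∂μ
      = ∑ i ∈ Finset.Icc 1 n, ∫ ω, (f i ω) ^ 2 ∂μ := by
  induction n with
  | zero => simp
  | succ n ih =>
    have hins : Finset.Icc 1 (n + 1) = insert (n + 1) (Finset.Icc 1 n) := by
      ext k; simp only [Finset.mem_Icc, Finset.mem_insert]; omega
    have hnotmem : (n + 1) ∉ Finset.Icc 1 n := by simp
    -- measurability/integrability facts
    have hfim : ∀ i, 1 ≤ i → AEStronglyMeasurable (f i) μ :=
      fun i hi => ((hfm i hi).mono (hGle i)).aestronglyMeasurable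
    have hfint : ∀ i, 1 ≤ i → Integrable (f i) μ := fun i hi =>
      memLp_one_iff_integrable.mp <| MemLp.of_bound (hfim i hi) C <|
        (hfb i hi).mono fun ω h => by simpa [Real.norm_eq_abs] using h
    set S : Ω → ℝ := fun ω => ∑ i ∈ Finset.Icc 1 n, f i ω with hS
    have hSm : StronglyMeasurable[G n] S := by
      apply Finset.stronglyMeasurable_fun_sum
      intro i hi
      simp only [Finset.mem_Icc] at hi
      exact (hfm i hi.1).mono (hGmono hi.2)
    have hSmeas : AEStronglyMeasurable S μ := (hSm.mono (hGle n)).aestronglyMeasurable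
    have hSb : ∀ᵐ ω ∂μ, |S ω| ≤ n * C := by
      have : ∀ᵐ ω ∂μ, ∀ i, i ∈ Finset.Icc 1 n → |f i ω| ≤ C := by
        rw [ae_all_iff]
        intro i
        by_cases hi : i ∈ Finset.Icc 1 n
        · exact (hfb i (Finset.mem_Icc.mp hi).1).mono fun ω h _ => h
        · exact Filter.Eventually.of_forall fun ω h => absurd h hi
      refine this.mono fun ω hω => ?_
      calc |S ω| ≤ ∑ i ∈ Finset.Icc 1 n, |f i ω| := Finset.abs_sum_le_sum_abs _ _
        _ ≤ ∑ i ∈ Finset.Icc 1 n, C := Finset.sum_le_sum fun i hi => hω i hi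
        _ = n * C := by
            rw [Finset.sum_const, Nat.card_Icc]
            simp
    have hSint : Integrable S μ := memLp_one_iff_integrable.mp <|
      MemLp.of_bound hSmeas (n * C) <| hSb.mono fun ω h => by
        simpa [Real.norm_eq_abs] using h
    have hg := hfint (n + 1) (by omega)
    have hgb := hfb (n + 1) (by omega)
    have hgm := hfim (n + 1) (by omega)
    have hSf : Integrable (fun ω => S ω * f (n + 1) ω) μ :=
      Integrable.bdd_mul hg hSmeas (hSb.mono fun ω h => by
        simpa [Real.norm_eq_abs] using h)
    have hf2 : Integrable (fun ω => (f (n + 1) ω) ^ 2) μ := by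
      have := Integrable.bdd_mul hg hgm (hgb.mono fun ω h => by
        simpa [Real.norm_eq_abs] using h)
      simpa [sq] using this
    have hS2 : Integrable (fun ω => (S ω) ^ 2) μ := by
      have := Integrable.bdd_mul hSint hSmeas (hSb.mono fun ω h => by
        simpa [Real.norm_eq_abs] using h)
      simpa [sq] using this
    -- cross term vanishes
    have hcross : ∫ ω, S ω * f (n + 1) ω ∂μ = 0 := by
      rw [my_integral_mul_condexp (hGle n) hSm hSf hg]
      have h0 : μ[f (n + 1)|G n] =ᵐ[μ] 0 := by
        simpa using hmart (n + 1) (by omega)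
      calc ∫ ω, S ω * (μ[f (n + 1)|G n]) ω ∂μ = ∫ ω, S ω * (0 : ℝ) ∂μ :=
            integral_congr_ae (h0.mono fun ω hω => by
              simp only [Pi.zero_apply] at hω
              simp [hω])
        _ = 0 := by simp
    rw [hins]
    simp only [Finset.sum_insert hnotmem]
    have hexp : ∀ ω, (f (n + 1) ω + S ω) ^ 2
        = (S ω) ^ 2 + 2 * (S ω * f (n + 1) ω) + (f (n + 1) ω) ^ 2 := by
      intro ω; ring
    calc ∫ ω, (f (n + 1) ω + ∑ i ∈ Finset.Icc 1 n, f i ω) ^ 2 ∂μ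
        = ∫ ω, ((S ω) ^ 2 + 2 * (S ω * f (n + 1) ω) + (f (n + 1) ω) ^ 2) ∂μ := by
          exact integral_congr_ae (Filter.Eventually.of_forall fun ω => hexp ω)
      _ = ∫ ω, (S ω) ^ 2 ∂μ + 2 * ∫ ω, S ω * f (n + 1) ω ∂μ
            + ∫ ω, (f (n + 1) ω) ^ 2 ∂μ := by
          have h1 : Integrable (fun ω => S ω ^ 2 + 2 * (S ω * f (n + 1) ω)) μ :=
            hS2.add (hSf.const_mul 2)
          have h2 : Integrable (fun ω => 2 * (S ω * f (n + 1) ω)) μ := hSf.const_mul 2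
          rw [integral_add h1 hf2, integral_add hS2 h2, integral_const_mul]
      _ = ∫ ω, (f (n + 1) ω) ^ 2 ∂μ + ∑ i ∈ Finset.Icc 1 n, ∫ ω, (f i ω) ^ 2 ∂μ := by
          rw [hcross, ih]; ring

lemma my_meas_trunc {Ω : Type*} [MeasurableSpace Ω] {g : Ω → ℝ} (hg : Measurable g) (ε : ℝ) :
    Measurable (fun ω => if |g ω| ≤ ε then g ω else 0) :=
  Measurable.ite (measurableSet_le hg.abs measurable_const) hg measurable_const

lemma my_meas_trunc' {Ω : Type*} [MeasurableSpace Ω] {g : Ω → ℝ} (hg : Measurable g) (ε : ℝ) :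
    Measurable (fun ω => if ε < |g ω| then g ω else 0) :=
  Measurable.ite (measurableSet_lt measurable_const hg.abs) hg measurable_const

lemma my_meas_set {Ω : Type*} [MeasurableSpace Ω] {g : Ω → ℝ} (hg : Measurable g) (ε : ℝ) :
    MeasurableSet {ω | ε < |g ω|} :=
  measurableSet_lt measurable_const hg.abs

end helpers

/-- Quantitative `L¹` bound for martingale differences:
`E|Σ d_i| ≤ (ε Σ E|d_i|)^{1/2} + 2 Σ E(|d_i| 1_{|d_i| > ε})`. -/
theorem stmt6 {Ω : Type*} {m0 : MeasurableSpace Ω} (μ : Measure Ω) [IsProbabilityMeasure μ]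
    (G : ℕ → MeasurableSpace Ω) (hGmono : Monotone G) (hGle : ∀ i, G i ≤ m0)
    (m : ℕ) (d : ℕ → Ω → ℝ)
    (hd2 : ∀ i, MemLp (d i) 2 μ)
    (hadapt : ∀ i, 1 ≤ i → StronglyMeasurable[G i] (d i))
    (hmart : ∀ i, 1 ≤ i → i ≤ m → μ[d i|G (i - 1)] =ᵐ[μ] 0)
    (ε : ℝ) (hε : 0 < ε) :
    ∫ ω, |∑ i ∈ Finset.Icc 1 m, d i ω| ∂μ
      ≤ Real.sqrt (ε * ∑ i ∈ Finset.Icc 1 m, ∫ ω, |d i ω| ∂μ)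
        + 2 * ∑ i ∈ Finset.Icc 1 m, ∫ ω in {ω | ε < |d i ω|}, |d i ω| ∂μ := by
  classical
  set a : ℕ → Ω → ℝ := fun i ω => if |d i ω| ≤ ε then d i ω else 0 with ha_def
  set b : ℕ → Ω → ℝ := fun i ω => if ε < |d i ω| then d i ω else 0 with hb_def
  set e : ℕ → Ω → ℝ := fun i => μ[a i|G (i - 1)] with he_def
  set f : ℕ → Ω → ℝ := fun i ω => a i ω - e i ω with hf_def
  -- pointwise facts
  have hab : ∀ i ω, a i ω + b i ω = d i ω := by
    intro i ω
    simp only [ha_def, hb_def]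
    by_cases h : |d i ω| ≤ ε
    · simp [h, not_lt.mpr h]
    · simp [h, not_le.mp h]
  have habs : ∀ i ω, |a i ω| ≤ ε := by
    intro i ω
    simp only [ha_def]
    by_cases h : |d i ω| ≤ ε
    · simpa [h] using h
    · simp [h, hε.le]
  have ha_le_d : ∀ i ω, |a i ω| ≤ |d i ω| := by
    intro i ω; simp only [ha_def]; split <;> simp [abs_nonneg]
  have hb_le_d : ∀ i ω, |b i ω| ≤ |d i ω| := by
    intro i ω; simp only [hb_def]; split <;> simp [abs_nonneg]
  -- measurability
  have hdm : ∀ i, 1 ≤ i → Measurable[G i] (d i) := fun i hi => (hadapt i hi).measurable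
  have ham : ∀ i, 1 ≤ i → StronglyMeasurable[G i] (a i) := by
    intro i hi
    exact (@my_meas_trunc Ω (G i) (d i) (hdm i hi) ε).stronglyMeasurable
  have hbm : ∀ i, 1 ≤ i → StronglyMeasurable[G i] (b i) := by
    intro i hi
    exact (@my_meas_trunc' Ω (G i) (d i) (hdm i hi) ε).stronglyMeasurable
  have ham0 : ∀ i, 1 ≤ i → AEStronglyMeasurable (a i) μ :=
    fun i hi => ((ham i hi).mono (hGle i)).aestronglyMeasurable
  have hbm0 : ∀ i, 1 ≤ i → AEStronglyMeasurable (b i) μ :=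
    fun i hi => ((hbm i hi).mono (hGle i)).aestronglyMeasurable
  -- integrability
  have hd_int : ∀ i, Integrable (d i) μ := fun i => (hd2 i).integrable one_le_two
  have ha_int : ∀ i, 1 ≤ i → Integrable (a i) μ := fun i hi =>
    (hd_int i).mono (ham0 i hi) (ae_of_all _ fun ω => by
      simpa [Real.norm_eq_abs] using ha_le_d i ω)
  have hb_int : ∀ i, 1 ≤ i → Integrable (b i) μ := fun i hi =>
    (hd_int i).mono (hbm0 i hi) (ae_of_all _ fun ω => by
      simpa [Real.norm_eq_abs] using hb_le_d i ω)
  -- conditional expectation facts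
  have he_sm : ∀ i, StronglyMeasurable[G (i - 1)] (e i) := fun i => stronglyMeasurable_condExp
  have he_int : ∀ i, Integrable (e i) μ := fun i => integrable_condExp
  have he_bdd : ∀ i, ∀ᵐ ω ∂μ, |e i ω| ≤ ε := by
    intro i
    have h := ae_bdd_condExp_of_ae_bdd (μ := μ) (m := G (i - 1)) (R := ε.toNNReal)
      (f := a i) (ae_of_all _ fun ω => by
        simpa [Real.coe_toNNReal ε hε.le] using habs i ω)
    simpa [Real.coe_toNNReal ε hε.le] using h
  -- f facts
  have hfm : ∀ i, 1 ≤ i → StronglyMeasurable[G i] (f i) := fun i hi =>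
    (ham i hi).sub ((he_sm i).mono (hGmono (Nat.sub_le i 1)))
  have hfm0 : ∀ i, 1 ≤ i → AEStronglyMeasurable (f i) μ :=
    fun i hi => ((hfm i hi).mono (hGle i)).aestronglyMeasurable
  have hfb : ∀ i, 1 ≤ i → ∀ᵐ ω ∂μ, |f i ω| ≤ 2 * ε := by
    intro i _
    refine (he_bdd i).mono fun ω hω => ?_
    calc |f i ω| ≤ |a i ω| + |e i ω| := abs_sub _ _
      _ ≤ ε + ε := add_le_add (habs i ω) hω
      _ = 2 * ε := by ring
  have hf_int : ∀ i, 1 ≤ i → Integrable (f i) μ := fun i hi =>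
    (ha_int i hi).sub (he_int i)
  have hfmart : ∀ i, 1 ≤ i → μ[f i|G (i - 1)] =ᵐ[μ] 0 := by
    intro i hi
    have h1 : μ[f i|G (i - 1)] =ᵐ[μ] μ[a i|G (i - 1)] - μ[e i|G (i - 1)] :=
      condExp_sub (ha_int i hi) (he_int i) _
    have h2 : μ[e i|G (i - 1)] = e i :=
      condExp_of_stronglyMeasurable (hGle (i - 1)) (he_sm i) (he_int i)
    refine h1.trans ?_
    rw [h2, show μ[a i|G (i - 1)] = e i from rfl]
    filter_upwards with ω
    simp
  -- (I) the L² part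
  set S : Ω → ℝ := fun ω => ∑ i ∈ Finset.Icc 1 m, f i ω with hS_def
  have hSmeas : AEStronglyMeasurable S μ := by
    apply Finset.aestronglyMeasurable_fun_sum
    intro i hi
    exact hfm0 i (Finset.mem_Icc.mp hi).1
  have hSb : ∀ᵐ ω ∂μ, |S ω| ≤ m * (2 * ε) := by
    have h : ∀ᵐ ω ∂μ, ∀ i, i ∈ Finset.Icc 1 m → |f i ω| ≤ 2 * ε := by
      rw [ae_all_iff]
      intro i
      by_cases hi : i ∈ Finset.Icc 1 m
      · exact (hfb i (Finset.mem_Icc.mp hi).1).mono fun ω h _ => h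
      · exact Filter.Eventually.of_forall fun ω h => absurd h hi
    refine h.mono fun ω hω => ?_
    calc |S ω| ≤ ∑ i ∈ Finset.Icc 1 m, |f i ω| := Finset.abs_sum_le_sum_abs _ _
      _ ≤ ∑ i ∈ Finset.Icc 1 m, (2 * ε) := Finset.sum_le_sum fun i hi => hω i hi
      _ = m * (2 * ε) := by rw [Finset.sum_const, Nat.card_Icc]; simp
  have hS2 : MemLp S 2 μ :=
    MemLp.of_bound hSmeas (m * (2 * ε)) (hSb.mono fun ω h => by
      simpa [Real.norm_eq_abs] using h)
  have key1 : ∫ ω, |S ω| ∂μ ≤ Real.sqrt (ε * ∑ i ∈ Finset.Icc 1 m, ∫ ω, |d i ω| ∂μ) := by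
    refine (my_abs_integral_le_sqrt hS2).trans ?_
    rw [my_sq_sum_integral G hGmono hGle f (2 * ε) hfm hfb hfmart m]
    apply Real.sqrt_le_sqrt
    rw [Finset.mul_sum]
    apply Finset.sum_le_sum
    intro i hi
    obtain ⟨hi1, _⟩ := Finset.mem_Icc.mp hi
    -- ∫ (a - e)² = ∫ a² - ∫ e² ≤ ∫ a² ≤ ε ∫ |d|
    have ha2_int : Integrable (fun ω => (a i ω) ^ 2) μ := by
      have := Integrable.bdd_mul (ha_int i hi1) (ham0 i hi1)
        (ae_of_all _ fun ω => by simpa [Real.norm_eq_abs] using habs i ω)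
      simpa [sq] using this
    have he2_int : Integrable (fun ω => (e i ω) ^ 2) μ := by
      have := Integrable.bdd_mul (he_int i) (((he_sm i).mono (hGle (i - 1))).aestronglyMeasurable)
        ((he_bdd i).mono fun ω h => by simpa [Real.norm_eq_abs] using h)
      simpa [sq] using this
    have hae_int : Integrable (fun ω => e i ω * a i ω) μ :=
      Integrable.bdd_mul (ha_int i hi1)
        (((he_sm i).mono (hGle (i - 1))).aestronglyMeasurable)
        ((he_bdd i).mono fun ω h => by simpa [Real.norm_eq_abs] using h)
    have hcross : ∫ ω, e i ω * a i ω ∂μ = ∫ ω, (e i ω) ^ 2 ∂μ := by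
      rw [my_integral_mul_condexp (hGle (i - 1)) (he_sm i) hae_int (ha_int i hi1)]
      congr 1
      funext ω
      simp [sq, he_def]
    have hexpand : ∫ ω, (f i ω) ^ 2 ∂μ
        = ∫ ω, (a i ω) ^ 2 ∂μ - ∫ ω, (e i ω) ^ 2 ∂μ := by
      have hpt : ∀ ω, (f i ω) ^ 2
          = (a i ω) ^ 2 - 2 * (e i ω * a i ω) + (e i ω) ^ 2 := by
        intro ω; simp only [hf_def]; ring
      calc ∫ ω, (f i ω) ^ 2 ∂μ
          = ∫ ω, ((a i ω) ^ 2 - 2 * (e i ω * a i ω) + (e i ω) ^ 2) ∂μ :=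
            integral_congr_ae (Filter.Eventually.of_forall hpt)
        _ = (∫ ω, (a i ω) ^ 2 ∂μ - 2 * ∫ ω, e i ω * a i ω ∂μ) + ∫ ω, (e i ω) ^ 2 ∂μ := by
            have h1 : Integrable (fun ω => (a i ω) ^ 2 - 2 * (e i ω * a i ω)) μ :=
              ha2_int.sub (hae_int.const_mul 2)
            have h2 : Integrable (fun ω => 2 * (e i ω * a i ω)) μ := hae_int.const_mul 2
            rw [integral_add h1 he2_int, integral_sub ha2_int h2, integral_const_mul]
        _ = ∫ ω, (a i ω) ^ 2 ∂μ - ∫ ω, (e i ω) ^ 2 ∂μ := by rw [hcross]; ring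
    have ha2_le : ∫ ω, (a i ω) ^ 2 ∂μ ≤ ε * ∫ ω, |d i ω| ∂μ := by
      rw [← integral_const_mul]
      apply integral_mono ha2_int ((hd_int i).abs.const_mul ε)
      intro ω
      simp only [ha_def]
      by_cases h : |d i ω| ≤ ε
      · simp only [h, if_true]
        nlinarith [sq_abs (d i ω), abs_nonneg (d i ω)]
      · simp only [h, if_false]
        have : (0 : ℝ) ^ 2 = 0 := by norm_num
        rw [this]
        positivity
    have he2_nonneg : 0 ≤ ∫ ω, (e i ω) ^ 2 ∂μ := integral_nonneg fun ω => sq_nonneg _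
    linarith [hexpand, ha2_le, he2_nonneg]
  -- (II) the L¹ part
  have key2 : ∀ i, 1 ≤ i → i ≤ m →
      ∫ ω, |e i ω| ∂μ ≤ ∫ ω in {ω | ε < |d i ω|}, |d i ω| ∂μ := by
    intro i hi1 him
    have hsplit : a i = fun ω => d i ω - b i ω := by
      funext ω; have := hab i ω; linarith
    have h1 : e i =ᵐ[μ] fun ω => (μ[d i|G (i - 1)]) ω - (μ[b i|G (i - 1)]) ω := by
      rw [he_def]
      simp only
      rw [hsplit]
      exact condExp_sub (hd_int i) (hb_int i hi1) _
    have h2 : e i =ᵐ[μ] fun ω => -(μ[b i|G (i - 1)]) ω := by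
      refine h1.trans ?_
      filter_upwards [hmart i hi1 him] with ω hω
      simp only [Pi.zero_apply] at hω
      simp [hω]
    have h3 : ∫ ω, |e i ω| ∂μ = ∫ ω, |(μ[b i|G (i - 1)]) ω| ∂μ :=
      integral_congr_ae (h2.mono fun ω hω => by
        show |e i ω| = |(μ[b i|G (i - 1)]) ω|
        rw [show e i ω = -(μ[b i|G (i - 1)]) ω from hω, abs_neg])
    have h4 : ∫ ω, |(μ[b i|G (i - 1)]) ω| ∂μ ≤ ∫ ω, |b i ω| ∂μ :=
      integral_abs_condExp_le _
    have h5 : ∫ ω, |b i ω| ∂μ = ∫ ω in {ω | ε < |d i ω|}, |d i ω| ∂μ := by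
      have hset : MeasurableSet {ω | ε < |d i ω|} :=
        hGle i _ (@my_meas_set Ω (G i) (d i) (hdm i hi1) ε)
      rw [← integral_indicator hset]
      congr 1
      funext ω
      simp only [hb_def, Set.indicator, Set.mem_setOf_eq]
      by_cases h : ε < |d i ω|
      · simp [h]
      · simp [h]
    rw [h3, h5.symm] at *
    linarith
  have hb_eq : ∀ i, 1 ≤ i → ∫ ω, |b i ω| ∂μ = ∫ ω in {ω | ε < |d i ω|}, |d i ω| ∂μ := by
    intro i hi1
    have hset : MeasurableSet {ω | ε < |d i ω|} :=
      hGle i _ (@my_meas_set Ω (G i) (d i) (hdm i hi1) ε)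
    rw [← integral_indicator hset]
    congr 1
    funext ω
    simp only [hb_def, Set.indicator, Set.mem_setOf_eq]
    by_cases h : ε < |d i ω|
    · simp [h]
    · simp [h]
  -- (III) combine
  set T : Ω → ℝ := fun ω => ∑ i ∈ Finset.Icc 1 m, (b i ω + e i ω) with hT_def
  have hdsum : ∀ ω, ∑ i ∈ Finset.Icc 1 m, d i ω = S ω + T ω := by
    intro ω
    rw [hS_def, hT_def]
    simp only [← Finset.sum_add_distrib]
    apply Finset.sum_congr rfl
    intro i _
    have := hab i ω
    simp only [hf_def]
    ring_nf
    linarith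
  have hS_int : Integrable S μ := hS2.integrable one_le_two
  have hT_int : Integrable T μ := by
    apply integrable_finset_sum
    intro i hi
    exact (hb_int i (Finset.mem_Icc.mp hi).1).add (he_int i)
  have hstep : ∫ ω, |∑ i ∈ Finset.Icc 1 m, d i ω| ∂μ
      ≤ ∫ ω, |S ω| ∂μ + ∫ ω, |T ω| ∂μ := by
    have hd_sum_int : Integrable (fun ω => ∑ i ∈ Finset.Icc 1 m, d i ω) μ :=
      integrable_finset_sum _ fun i _ => hd_int i
    rw [← integral_add hS_int.abs hT_int.abs]
    refine integral_mono hd_sum_int.abs (hS_int.abs.add hT_int.abs) fun ω => ?_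
    show |∑ i ∈ Finset.Icc 1 m, d i ω| ≤ |S ω| + |T ω|
    rw [hdsum ω]
    exact abs_add_le _ _
  have hT_le : ∫ ω, |T ω| ∂μ
      ≤ 2 * ∑ i ∈ Finset.Icc 1 m, ∫ ω in {ω | ε < |d i ω|}, |d i ω| ∂μ := by
    have hbeabs_int : ∀ i ∈ Finset.Icc 1 m, Integrable (fun ω => |b i ω + e i ω|) μ := by
      intro i hi
      have h : Integrable (fun ω => b i ω + e i ω) μ :=
        (hb_int i (Finset.mem_Icc.mp hi).1).add (he_int i)
      exact h.abs
    have h1 : ∫ ω, |T ω| ∂μ ≤ ∑ i ∈ Finset.Icc 1 m, ∫ ω, |b i ω + e i ω| ∂μ := by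
      have h2 : ∫ ω, |T ω| ∂μ ≤ ∫ ω, ∑ i ∈ Finset.Icc 1 m, |b i ω + e i ω| ∂μ := by
        apply integral_mono hT_int.abs (integrable_finset_sum _ hbeabs_int)
        intro ω
        exact Finset.abs_sum_le_sum_abs _ _
      rwa [integral_finset_sum _ hbeabs_int] at h2
    refine h1.trans ?_
    rw [two_mul, ← Finset.sum_add_distrib]
    apply Finset.sum_le_sum
    intro i hi
    obtain ⟨hi1, him⟩ := Finset.mem_Icc.mp hi
    have htri : ∫ ω, |b i ω + e i ω| ∂μ ≤ ∫ ω, |b i ω| ∂μ + ∫ ω, |e i ω| ∂μ := by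
      rw [← integral_add (hb_int i hi1).abs (he_int i).abs]
      apply integral_mono ((hb_int i hi1).add (he_int i)).abs
        ((hb_int i hi1).abs.add (he_int i).abs)
      intro ω
      exact abs_add_le _ _
    calc ∫ ω, |b i ω + e i ω| ∂μ ≤ ∫ ω, |b i ω| ∂μ + ∫ ω, |e i ω| ∂μ := htri
      _ ≤ ∫ ω in {ω | ε < |d i ω|}, |d i ω| ∂μ + ∫ ω in {ω | ε < |d i ω|}, |d i ω| ∂μ := by
          rw [← hb_eq i hi1]
          exact add_le_add le_rfl ((hb_eq i hi1) ▸ key2 i hi1 him)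
  linarith [hstep, key1, hT_le]
end

section
/- With the setting of the conditional ergodic theorem (measure-preserving bijection T, filtration F_i = T^{-i}(F_0), Z ∈ L^1 F_∞-measurable, Z_k = Z ∘ T^k), one has (1/n) E( max_{1 ≤ i ≤ n} |Z_i| | F_0 ) → 0 almost surely and in L^1 as n → ∞. -/
open MeasureTheory ProbabilityTheory Filter

namespace Stmt8

variable {Ω : Type*} {F0 m0 : MeasurableSpace Ω}

/-- Iterated Markov operator: `Q f 0 = f`, `Q f (i+1) = E((Q f i) ∘ T | F0)`. -/
noncomputable def Q (μ : Measure Ω) (T : Ω → Ω) (F0 : MeasurableSpace Ω) (f : Ω → ℝ) :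
    ℕ → Ω → ℝ
  | 0 => f
  | i + 1 => μ[(Q μ T F0 f i) ∘ T | F0]

variable {μ : Measure Ω} [IsProbabilityMeasure μ] {T : Ω → Ω}
set_option linter.unusedSectionVars false

theorem integral_comp_T (hT : MeasurePreserving T μ μ) {f : Ω → ℝ}
    (hf : AEStronglyMeasurable f μ) :
    ∫ ω, f (T ω) ∂μ = ∫ ω, f ω ∂μ := by
  have h1 : ∫ ω, f ω ∂μ = ∫ ω, f ω ∂(Measure.map T μ) := by rw [hT.map_eq]
  rw [h1, integral_map hT.measurable.aemeasurable (by rwa [hT.map_eq])]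

theorem integral_comp_iter (hT : MeasurePreserving T μ μ) (k : ℕ) {f : Ω → ℝ}
    (hf : AEStronglyMeasurable f μ) :
    ∫ ω, f (T^[k] ω) ∂μ = ∫ ω, f ω ∂μ :=
  integral_comp_T (hT.iterate k) hf

theorem integrable_comp_T (hT : MeasurePreserving T μ μ) {f : Ω → ℝ} (hf : Integrable f μ) :
    Integrable (f ∘ T) μ :=
  (hT.integrable_comp hf.aestronglyMeasurable).2 hf

theorem integrable_comp_iter (hT : MeasurePreserving T μ μ) (k : ℕ) {f : Ω → ℝ}
    (hf : Integrable f μ) : Integrable (f ∘ T^[k]) μ :=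
  ((hT.iterate k).integrable_comp hf.aestronglyMeasurable).2 hf

theorem Q_integrable {f : Ω → ℝ} (hf : Integrable f μ) : ∀ i, Integrable (Q μ T F0 f i) μ
  | 0 => hf
  | _ + 1 => integrable_condExp

theorem Q_nonneg (hT : MeasurePreserving T μ μ) {f : Ω → ℝ} (hf : 0 ≤ f) :
    ∀ i, 0 ≤ᵐ[μ] Q μ T F0 f i
  | 0 => Filter.Eventually.of_forall hf
  | i + 1 => by
    refine condExp_nonneg ?_
    filter_upwards [hT.quasiMeasurePreserving.tendsto_ae.eventually (Q_nonneg hT hf i)] with ω hω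
    exact hω

theorem Q_integral (hT : MeasurePreserving T μ μ) (hF0 : F0 ≤ m0) {f : Ω → ℝ}
    (hf : Integrable f μ) : ∀ i, ∫ ω, Q μ T F0 f i ω ∂μ = ∫ ω, f ω ∂μ
  | 0 => rfl
  | i + 1 => by
    have h1 : ∫ ω, Q μ T F0 f (i + 1) ω ∂μ = ∫ ω, (Q μ T F0 f i) (T ω) ∂μ :=
      integral_condExp hF0
    rw [h1, integral_comp_T hT (Q_integrable hf i).aestronglyMeasurable, Q_integral hT hF0 hf i]

theorem setIntegral_comp_T (hT : MeasurePreserving T μ μ) {g : Ω → ℝ}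
    (hg : AEStronglyMeasurable g μ) {B : Set Ω} (hB : MeasurableSet B) :
    ∫ ω in T ⁻¹' B, g (T ω) ∂μ = ∫ ω in B, g ω ∂μ := by
  have h2 : ∀ ω, (T ⁻¹' B).indicator (fun ω => g (T ω)) ω = (B.indicator g) (T ω) := by
    intro ω
    by_cases h : T ω ∈ B <;> simp [Set.indicator, Set.mem_preimage, h]
  rw [← integral_indicator (hT.measurable hB), ← integral_indicator hB]
  calc ∫ ω, (T ⁻¹' B).indicator (fun ω => g (T ω)) ω ∂μ
      = ∫ ω, (B.indicator g) (T ω) ∂μ := by simp_rw [h2]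
    _ = ∫ ω, (B.indicator g) ω ∂μ := integral_comp_T hT (hg.indicator hB)

/-- set-integral characterization of `Q f i` over `F0`-sets. -/
theorem Q_setIntegral (hT : MeasurePreserving T μ μ) (hF0 : F0 ≤ m0) (hF0T : F0 ≤ F0.comap T)
    {f : Ω → ℝ} (hf : Integrable f μ) :
    ∀ i, ∀ A : Set Ω, MeasurableSet[F0] A →
      ∫ ω in A, Q μ T F0 f i ω ∂μ = ∫ ω in A, f (T^[i] ω) ∂μ
  | 0, A, hA => by simp [Q]
  | i + 1, A, hA => by
    obtain ⟨B, hB, rfl⟩ := hF0T A hA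
    have hBm : MeasurableSet B := hF0 B hB
    have hQi : Integrable (Q μ T F0 f i) μ := Q_integrable hf i
    have h1 : ∫ ω in T ⁻¹' B, Q μ T F0 f (i + 1) ω ∂μ
        = ∫ ω in T ⁻¹' B, (Q μ T F0 f i) (T ω) ∂μ :=
      setIntegral_condExp hF0 (integrable_comp_T hT hQi) hA
    rw [h1, setIntegral_comp_T hT hQi.aestronglyMeasurable hBm,
      Q_setIntegral hT hF0 hF0T hf i B hB]
    simp_rw [Function.iterate_succ_apply]
    exact (setIntegral_comp_T hT
      (g := fun ω => f (T^[i] ω)) ((integrable_comp_iter hT i hf).aestronglyMeasurable) hBm).symm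

/-- `Q f (i+1)` is a version of `E(f ∘ T^[i+1] | F0)`. -/
theorem Q_eq_condexp (hT : MeasurePreserving T μ μ) (hF0 : F0 ≤ m0) (hF0T : F0 ≤ F0.comap T)
    {f : Ω → ℝ} (hf : Integrable f μ) (i : ℕ) :
    Q μ T F0 f (i + 1) =ᵐ[μ] μ[fun ω => f (T^[i + 1] ω) | F0] := by
  refine ae_eq_condExp_of_forall_setIntegral_eq hF0 (integrable_comp_iter hT (i + 1) hf)
    (fun s hs _ => (Q_integrable hf (i + 1)).integrableOn)
    (fun s hs _ => Q_setIntegral hT hF0 hF0T hf (i + 1) s hs) ?_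
  exact StronglyMeasurable.aestronglyMeasurable stronglyMeasurable_condExp

theorem integrable_finset_sup' {ι : Type*} (s : Finset ι) (F : ι → Ω → ℝ) :
    ∀ (_ : ∀ i ∈ s, Integrable (F i) μ) (hs : s.Nonempty),
    Integrable (fun ω => s.sup' hs fun i => F i ω) μ := by
  induction s using Finset.cons_induction with
  | empty => exact fun _ hs => absurd hs (by simp)
  | cons a t ha ih =>
    intro hF hs
    rcases t.eq_empty_or_nonempty with rfl | ht
    · simpa using hF a (by simp)
    · have he : (fun ω => (Finset.cons a t ha).sup' hs fun i => F i ω)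
          = fun ω => (F a ω) ⊔ (t.sup' ht fun i => F i ω) := by
        funext ω; rw [Finset.sup'_cons ht]
      rw [he]
      exact (hF a (Finset.mem_cons_self a t)).sup
        (ih (fun i hi => hF i (Finset.mem_cons.2 (Or.inr hi))) ht)

theorem mp_measurable {μ : Measure Ω} {T : Ω → Ω} (hT : MeasurePreserving T μ μ) :
    Measurable T := hT.measurable

theorem meas_W {Z : Ω → ℝ} (hZm : Measurable Z) (c : ℝ) :
    Measurable (fun ω => max (|Z ω| - c) 0) :=
  (hZm.abs.sub measurable_const).max measurable_const

theorem meas_M {Z : Ω → ℝ} (hZm : Measurable Z) (hTm : Measurable T) (n : ℕ) :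
    Measurable (fun ω => ⨆ i : Set.Icc 1 n, |Z (T^[(i : ℕ)] ω)|) :=
  Measurable.iSup fun i => (hZm.comp (hTm.iterate (i : ℕ))).abs

/-- Hopf-type maximal inequality for the Markov operator `Q`. -/
theorem hopf (hT : MeasurePreserving T μ μ) (hF0 : F0 ≤ m0) (hF0T : F0 ≤ F0.comap T)
    {h : Ω → ℝ} (hpos : 0 ≤ h) (hint : Integrable h μ) {ε : ℝ} (hε : 0 < ε) :
    μ {ω | ∃ n : ℕ, 1 ≤ n ∧ (n : ℝ) * ε < ∑ i ∈ Finset.range n, Q μ T F0 h (i + 1) ω}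
      ≤ ENNReal.ofReal (ε⁻¹ * ∫ ω, h ω ∂μ) := by
  classical
  set S : ℕ → Ω → ℝ := fun n ω => (∑ i ∈ Finset.range n, Q μ T F0 h (i + 1) ω) - n * ε with hS
  have hSmeas : ∀ n, Measurable (S n) := by
    intro n
    exact (Finset.measurable_sum _ fun i _ =>
      ((stronglyMeasurable_condExp (m := F0)).mono hF0).measurable).sub measurable_const
  have hQint : ∀ i, Integrable (Q μ T F0 h i) μ := Q_integrable hint
  have hSint : ∀ n, Integrable (S n) μ := by
    intro n
    exact (integrable_finset_sum _ fun i _ => hQint (i + 1)).sub (integrable_const _)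
  set E : ℕ → Set Ω := fun N => ⋃ n ∈ Finset.Icc 1 N, {ω | 0 < S n ω} with hE
  have hEmeas : ∀ N, MeasurableSet (E N) := fun N =>
    MeasurableSet.biUnion (Finset.Icc 1 N).countable_toSet
      (fun n _ => measurableSet_lt measurable_const (hSmeas n))
  have hEmono : Monotone E := by
    intro N M hNM
    refine Set.iUnion₂_subset fun n hn => ?_
    exact Set.subset_iUnion₂_of_subset n
      (Finset.mem_Icc.2 ⟨(Finset.mem_Icc.1 hn).1, le_trans (Finset.mem_Icc.1 hn).2 hNM⟩)
      subset_rfl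
  have hbound : ∀ N, μ (E N) ≤ ENNReal.ofReal (ε⁻¹ * ∫ ω, h ω ∂μ) := by
    intro N
    have hne : (Finset.range (N + 1)).Nonempty := ⟨0, Finset.mem_range.2 (Nat.succ_pos N)⟩
    set MN : Ω → ℝ := fun ω => (Finset.range (N + 1)).sup' hne (fun n => S n ω) with hMN
    have hMNint : Integrable MN μ :=
      integrable_finset_sup' _ _ (fun i _ => hSint i) hne
    have hS0 : ∀ ω, S 0 ω = 0 := by intro ω; simp [hS]
    have hMN0 : ∀ ω, 0 ≤ MN ω := by
      intro ω
      calc (0:ℝ) = S 0 ω := (hS0 ω).symm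
        _ ≤ MN ω := Finset.le_sup' (fun n => S n ω) (Finset.mem_range.2 (Nat.succ_pos N))
    have hMNTint : Integrable (MN ∘ T) μ := integrable_comp_T hT hMNint
    set G : Ω → ℝ := μ[MN ∘ T | F0] with hG
    have hGint : Integrable G μ := integrable_condExp
    have hGnonneg : 0 ≤ᵐ[μ] G :=
      condExp_nonneg (Filter.Eventually.of_forall fun ω => hMN0 (T ω))
    have hGeq : ∫ ω, G ω ∂μ = ∫ ω, MN ω ∂μ := by
      rw [hG, integral_condExp hF0]
      exact integral_comp_T hT hMNint.aestronglyMeasurable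
    -- key a.e. inequality
    have key : ∀ᵐ ω ∂μ, ∀ n ∈ Finset.range N, S (n + 1) ω ≤ Q μ T F0 h 1 ω - ε + G ω := by
      rw [Filter.eventually_all_finset]
      intro n hn
      have hn' : n < N := Finset.mem_range.1 hn
      -- conditional expectation of (S n) ∘ T
      have e0 : (S n) ∘ T = (fun ω => ∑ i ∈ Finset.range n, (Q μ T F0 h (i + 1) ∘ T) ω)
          - (fun _ => (n : ℝ) * ε) := rfl
      have e1 : μ[(S n) ∘ T | F0]
          =ᵐ[μ] fun ω => (∑ i ∈ Finset.range n, Q μ T F0 h (i + 2) ω) - n * ε := by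
        rw [e0]
        have hsum_int : Integrable (fun ω => ∑ i ∈ Finset.range n,
            (Q μ T F0 h (i + 1) ∘ T) ω) μ :=
          integrable_finset_sum _ fun i _ => integrable_comp_T hT (hQint (i + 1))
        have e2 : μ[fun ω => ∑ i ∈ Finset.range n, (Q μ T F0 h (i + 1) ∘ T) ω | F0]
            =ᵐ[μ] fun ω => ∑ i ∈ Finset.range n, Q μ T F0 h (i + 2) ω := by
          have e3 : (fun ω => ∑ i ∈ Finset.range n, (Q μ T F0 h (i + 1) ∘ T) ω)
              = ∑ i ∈ Finset.range n, (Q μ T F0 h (i + 1) ∘ T) := by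
            funext ω; simp [Finset.sum_apply]
          rw [e3]
          refine (condExp_finsetSum
            (fun i _ => integrable_comp_T hT (hQint (i + 1))) F0).trans ?_
          refine Filter.Eventually.of_forall fun ω => ?_
          simp only [Finset.sum_apply]
          rfl
        have e4 : μ[fun _ : Ω => (n : ℝ) * ε | F0] = fun _ => (n : ℝ) * ε :=
          condExp_const hF0 _
        refine (condExp_sub hsum_int (integrable_const _) F0).trans ?_
        rw [e4]
        filter_upwards [e2] with ω h2
        simp only [Pi.sub_apply]
        rw [h2]
      have e5 : μ[(S n) ∘ T | F0] ≤ᵐ[μ] G := by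
        refine condExp_mono (integrable_comp_T hT (hSint n)) hMNTint
          (Filter.Eventually.of_forall fun ω => ?_)
        exact Finset.le_sup' (fun m => S m (T ω)) (Finset.mem_range.2 (by omega))
      filter_upwards [e1, e5] with ω h1 h5
      have e6 : S (n + 1) ω
          = Q μ T F0 h 1 ω - ε + ((∑ i ∈ Finset.range n, Q μ T F0 h (i + 2) ω) - n * ε) := by
        simp only [hS, Finset.sum_range_succ']
        push_cast
        ring
      rw [e6, ← h1]
      exact add_le_add le_rfl h5
    -- on E N, MN ≤ Q h 1 - ε + G
    have onE : ∀ᵐ ω ∂μ, ω ∈ E N → MN ω ≤ Q μ T F0 h 1 ω - ε + G ω := by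
      filter_upwards [key] with ω hω hmem
      obtain ⟨n, hn, hSn⟩ := by
        simpa only [hE, Set.mem_iUnion, Set.mem_setOf_eq, exists_prop] using hmem
      obtain ⟨m, hm, hMeq⟩ := Finset.exists_mem_eq_sup' hne (fun k => S k ω)
      have hMpos : 0 < MN ω :=
        lt_of_lt_of_le hSn (Finset.le_sup' (fun k => S k ω)
          (Finset.mem_range.2 (by have := (Finset.mem_Icc.1 hn).2; omega)))
      rcases Nat.eq_zero_or_pos m with rfl | hm1
      · have h0 : MN ω = S 0 ω := hMeq
        rw [h0, hS0] at hMpos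
        exact absurd hMpos (lt_irrefl 0)
      · obtain ⟨k, rfl⟩ := Nat.exists_eq_succ_of_ne_zero (Nat.pos_iff_ne_zero.1 hm1)
        have hkN : k ∈ Finset.range N := Finset.mem_range.2 (by
          have := Finset.mem_range.1 hm; omega)
        have h0 : MN ω = S (k + 1) ω := hMeq
        rw [h0]
        exact hω k hkN
    -- integral comparison
    have hQ1 := hQint 1
    have int1 : ∫ ω in E N, (MN ω - G ω) ∂μ ≤ ∫ ω in E N, (Q μ T F0 h 1 ω - ε) ∂μ := by
      refine setIntegral_mono_ae_restrict
        ((hMNint.sub hGint).integrableOn)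
        ((hQ1.sub (integrable_const _)).integrableOn) ?_
      refine (ae_restrict_iff' (hEmeas N)).2 ?_
      filter_upwards [onE] with ω hω hmem
      have := hω hmem
      linarith
    have hMNoff : ∀ ω ∉ E N, MN ω = 0 := by
      intro ω hω
      refine le_antisymm ?_ (hMN0 ω)
      rw [hMN]
      refine Finset.sup'_le _ _ fun m hm => ?_
      rcases Nat.eq_zero_or_pos m with rfl | hm1
      · rw [hS0]
      · by_contra hc
        push_neg at hc
        exact hω (Set.mem_biUnion (Finset.mem_Icc.2
          ⟨hm1, by have := Finset.mem_range.1 hm; omega⟩) hc)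
    have intMN : ∫ ω in E N, MN ω ∂μ = ∫ ω, MN ω ∂μ := by
      rw [← integral_add_compl (hEmeas N) hMNint]
      have : ∫ ω in (E N)ᶜ, MN ω ∂μ = 0 :=
        setIntegral_eq_zero_of_forall_eq_zero fun ω hω => hMNoff ω hω
      rw [this, add_zero]
    have intG : ∫ ω in E N, G ω ∂μ ≤ ∫ ω, G ω ∂μ := setIntegral_le_integral hGint hGnonneg
    have int2 : 0 ≤ ∫ ω in E N, (Q μ T F0 h 1 ω - ε) ∂μ := by
      have e7 : ∫ ω in E N, (MN ω - G ω) ∂μ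
          = ∫ ω in E N, MN ω ∂μ - ∫ ω in E N, G ω ∂μ :=
        integral_sub hMNint.integrableOn hGint.integrableOn
      have : (0 : ℝ) ≤ ∫ ω in E N, (MN ω - G ω) ∂μ := by
        rw [e7, intMN]
        have := hGeq
        linarith
      linarith
    have int3 : ∫ ω in E N, (Q μ T F0 h 1 ω - ε) ∂μ
        = ∫ ω in E N, Q μ T F0 h 1 ω ∂μ - ε * (μ (E N)).toReal := by
      rw [integral_sub hQ1.integrableOn (integrable_const _).integrableOn,
        setIntegral_const]
      rw [smul_eq_mul, mul_comm]
      rfl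
    have int4 : ∫ ω in E N, Q μ T F0 h 1 ω ∂μ ≤ ∫ ω, h ω ∂μ := by
      calc ∫ ω in E N, Q μ T F0 h 1 ω ∂μ ≤ ∫ ω, Q μ T F0 h 1 ω ∂μ :=
            setIntegral_le_integral hQ1 (Q_nonneg hT hpos 1)
        _ = ∫ ω, h ω ∂μ := Q_integral hT hF0 hint 1
    have final : ε * (μ (E N)).toReal ≤ ∫ ω, h ω ∂μ := by
      rw [int3] at int2
      linarith
    have : (μ (E N)).toReal ≤ ε⁻¹ * ∫ ω, h ω ∂μ := by
      rw [inv_mul_eq_div, le_div_iff₀ hε]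
      linarith
    calc μ (E N) = ENNReal.ofReal ((μ (E N)).toReal) := by
          rw [ENNReal.ofReal_toReal (measure_ne_top μ _)]
      _ ≤ ENNReal.ofReal (ε⁻¹ * ∫ ω, h ω ∂μ) := ENNReal.ofReal_le_ofReal this
  -- pass to the union
  have hUnion : {ω | ∃ n : ℕ, 1 ≤ n ∧ (n : ℝ) * ε < ∑ i ∈ Finset.range n, Q μ T F0 h (i + 1) ω}
      = ⋃ N, E N := by
    ext ω
    simp only [Set.mem_setOf_eq, Set.mem_iUnion, hE, Finset.mem_Icc]
    constructor
    · rintro ⟨n, hn1, hlt⟩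
      exact ⟨n, n, ⟨hn1, le_refl n⟩, show (0:ℝ) < _ by simp only [Set.mem_setOf_eq, hS]; linarith⟩
    · rintro ⟨N, n, ⟨hn1, _⟩, hmem⟩
      have : 0 < S n ω := hmem
      rw [hS] at this
      exact ⟨n, hn1, by simp only at this; linarith⟩
  rw [hUnion]
  exact le_of_tendsto (tendsto_measure_iUnion_atTop hEmono)
    (Filter.Eventually.of_forall hbound)

end Stmt8

/-- In the setting of the conditional ergodic theorem,
`(1/n) E( max_{1 ≤ i ≤ n} |Z ∘ T^i| | F₀ ) → 0` almost surely and in `L¹`. -/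
theorem stmt8 {Ω : Type*} {m0 : MeasurableSpace Ω} (μ : Measure Ω) [IsProbabilityMeasure μ]
    (T : Ω → Ω) (hT : MeasurePreserving T μ μ) (hTbij : Function.Bijective T)
    (Tz : ℤ → Ω → Ω) (hTz0 : Tz 0 = id) (hTzsucc : ∀ k : ℤ, Tz (k + 1) = T ∘ Tz k)
    (hTzmeas : ∀ k, Measurable (Tz k))
    (F0 : MeasurableSpace Ω) (hF0 : F0 ≤ m0) (hF0T : F0 ≤ F0.comap T)
    (Z : Ω → ℝ) (hZint : Integrable Z μ)
    (hZmeas : StronglyMeasurable[⨆ k : ℤ, F0.comap (Tz k)] Z) :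
    (∀ᵐ ω ∂μ,
      Tendsto
        (fun n : ℕ => (n : ℝ)⁻¹ *
          (μ[(fun ω' => ⨆ i : Set.Icc 1 n, |Z (T^[(i : ℕ)] ω')|)|F0]) ω)
        atTop (nhds 0))
    ∧ Tendsto
        (fun n : ℕ => ∫ ω,
          |(n : ℝ)⁻¹ * (μ[(fun ω' => ⨆ i : Set.Icc 1 n, |Z (T^[(i : ℕ)] ω')|)|F0]) ω| ∂μ)
        atTop (nhds 0) := by
  classical
  have hsup_le : (⨆ k : ℤ, F0.comap (Tz k)) ≤ m0 :=
    iSup_le fun k => le_trans (MeasurableSpace.comap_mono hF0) (hTzmeas k).comap_le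
  have hZm : Measurable[m0] Z := (hZmeas.mono hsup_le).measurable
  -- truncations
  set W : ℕ → Ω → ℝ := fun c ω => max (|Z ω| - c) 0 with hW
  have hWpos : ∀ c, 0 ≤ W c := fun c ω => le_max_right _ _
  have hWm : ∀ c, Measurable[m0] (W c) := fun c => Stmt8.meas_W hZm (c : ℝ)
  have hWle : ∀ c (ω : Ω), W c ω ≤ |Z ω| := fun c ω =>
    max_le (sub_le_self _ (Nat.cast_nonneg c)) (abs_nonneg _)
  have hWint : ∀ c, Integrable (W c) μ := fun c =>
    hZint.abs.mono' (hWm c).aestronglyMeasurable (Filter.Eventually.of_forall fun ω => by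
      rw [Real.norm_eq_abs, abs_of_nonneg (hWpos c ω)]; exact hWle c ω)
  set δ : ℕ → ℝ := fun c => ∫ ω, W c ω ∂μ with hδdef
  have hδ0 : ∀ c, 0 ≤ δ c := fun c => integral_nonneg (hWpos c)
  have hδ : Tendsto δ atTop (nhds 0) := by
    have h0 : (0:ℝ) = ∫ (_ : Ω), (0:ℝ) ∂μ := by rw [integral_zero]
    rw [hδdef, h0]
    refine tendsto_integral_of_dominated_convergence (fun ω => |Z ω|)
      (fun c => (hWm c).aestronglyMeasurable) hZint.abs
      (fun c => Filter.Eventually.of_forall fun ω => by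
        rw [Real.norm_eq_abs, abs_of_nonneg (hWpos c ω)]; exact hWle c ω)
      (Filter.Eventually.of_forall fun ω => ?_)
    refine tendsto_atTop_of_eventually_const (i₀ := ⌈|Z ω|⌉₊) fun c hc => ?_
    rw [hW]
    exact max_eq_right (sub_nonpos.2 (le_trans (Nat.le_ceil _) (Nat.cast_le.2 hc)))
  -- the running maxima and their conditional expectations
  set M : ℕ → Ω → ℝ := fun n ω' => ⨆ i : Set.Icc 1 n, |Z (T^[(i : ℕ)] ω')| with hM
  have hMm : ∀ n, Measurable[m0] (M n) := fun n =>
    Stmt8.meas_M hZm (Stmt8.mp_measurable hT) n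
  have hMnonneg : ∀ n ω, 0 ≤ M n ω := fun n ω => Real.iSup_nonneg fun i => abs_nonneg _
  have hMle : ∀ c n (ω : Ω), M n ω ≤ c + ∑ i ∈ Finset.range n, W c (T^[i + 1] ω) := by
    intro c n ω
    have hsum0 : (0:ℝ) ≤ ∑ i ∈ Finset.range n, W c (T^[i + 1] ω) :=
      Finset.sum_nonneg fun i _ => hWpos c _
    refine Real.iSup_le (fun i => ?_) (by positivity)
    have hi1 : 1 ≤ (i : ℕ) := i.2.1
    have hin : (i : ℕ) ≤ n := i.2.2
    have h1 : |Z (T^[(i : ℕ)] ω)| ≤ c + W c (T^[(i : ℕ)] ω) := by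
      have := le_max_left (|Z (T^[(i : ℕ)] ω)| - c) 0
      rw [hW]; linarith
    have h2 : W c (T^[(i : ℕ)] ω) ≤ ∑ j ∈ Finset.range n, W c (T^[j + 1] ω) := by
      obtain ⟨j, hj⟩ : ∃ j, (i : ℕ) = j + 1 := ⟨(i : ℕ) - 1, by omega⟩
      have hlt : j < n := by omega
      have := Finset.single_le_sum (f := fun j => W c (T^[j + 1] ω))
        (fun j _ => hWpos c _) (Finset.mem_range.2 hlt)
      rw [hj]
      exact this
    linarith
  have hsum_int : ∀ c n, Integrable (fun ω => ∑ i ∈ Finset.range n, W c (T^[i + 1] ω)) μ :=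
    fun c n => integrable_finset_sum _ fun i _ =>
      Stmt8.integrable_comp_iter hT (i + 1) (hWint c)
  have hMint : ∀ n, Integrable (M n) μ := by
    intro n
    refine (hsum_int 0 n).mono' (hMm n).aestronglyMeasurable
      (Filter.Eventually.of_forall fun ω => ?_)
    rw [Real.norm_eq_abs, abs_of_nonneg (hMnonneg n ω)]
    have := hMle 0 n ω
    simpa using this
  set X : ℕ → Ω → ℝ := fun n => μ[M n | F0] with hX
  have hXnonneg : ∀ n, 0 ≤ᵐ[μ] X n := fun n =>
    condExp_nonneg (Filter.Eventually.of_forall (hMnonneg n))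
  have hXint_eq : ∀ n, ∫ ω, X n ω ∂μ = ∫ ω, M n ω ∂μ := fun n => integral_condExp hF0
  have hXle : ∀ c n, X n ≤ᵐ[μ]
      fun ω => c + ∑ i ∈ Finset.range n, Stmt8.Q μ T F0 (W c) (i + 1) ω := by
    intro c n
    have hcadd : Integrable (fun ω => (c:ℝ) + ∑ i ∈ Finset.range n, W c (T^[i + 1] ω)) μ :=
      (integrable_const _).add (hsum_int c n)
    have h1 : X n ≤ᵐ[μ]
        μ[fun ω => (c:ℝ) + ∑ i ∈ Finset.range n, W c (T^[i + 1] ω) | F0] :=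
      condExp_mono (hMint n) hcadd (Filter.Eventually.of_forall (hMle c n))
    have e0 : (fun ω => (c:ℝ) + ∑ i ∈ Finset.range n, W c (T^[i + 1] ω))
        = (fun _ : Ω => (c:ℝ)) + fun ω => ∑ i ∈ Finset.range n, W c (T^[i + 1] ω) := rfl
    have h2 : μ[fun ω => (c:ℝ) + ∑ i ∈ Finset.range n, W c (T^[i + 1] ω) | F0]
        =ᵐ[μ] fun ω => (c:ℝ) + ∑ i ∈ Finset.range n, Stmt8.Q μ T F0 (W c) (i + 1) ω := by
      rw [e0]
      refine (condExp_add (integrable_const _) (hsum_int c n) F0).trans ?_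
      rw [condExp_const hF0]
      have e1 : (fun ω => ∑ i ∈ Finset.range n, W c (T^[i + 1] ω))
          = ∑ i ∈ Finset.range n, fun ω => W c (T^[i + 1] ω) := by
        funext ω; rw [Finset.sum_apply]
      have h3 : μ[fun ω => ∑ i ∈ Finset.range n, W c (T^[i + 1] ω) | F0]
          =ᵐ[μ] fun ω => ∑ i ∈ Finset.range n, Stmt8.Q μ T F0 (W c) (i + 1) ω := by
        rw [e1]
        refine (condExp_finsetSum
          (fun i _ => Stmt8.integrable_comp_iter hT (i + 1) (hWint c)) F0).trans ?_
        have h4 : ∀ᵐ ω ∂μ, ∀ i ∈ Finset.range n,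
            (μ[fun ω' => W c (T^[i + 1] ω') | F0]) ω = Stmt8.Q μ T F0 (W c) (i + 1) ω := by
          rw [Filter.eventually_all_finset]
          intro i _
          filter_upwards [Stmt8.Q_eq_condexp hT hF0 hF0T (hWint c) i] with ω hω
          rw [← hω]
        filter_upwards [h4] with ω h4
        rw [Finset.sum_apply]
        exact Finset.sum_congr rfl h4
      filter_upwards [h3] with ω h3
      simp only [Pi.add_apply]
      rw [h3]
    exact h1.trans h2.le
  -- L¹ convergence
  have hL1bound : ∀ (c n : ℕ), 1 ≤ n →
      ∫ ω, |(n : ℝ)⁻¹ * X n ω| ∂μ ≤ c * (n : ℝ)⁻¹ + δ c := by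
    intro c n hn
    have hn0 : ((n : ℝ)) ≠ 0 := Nat.cast_ne_zero.2 (by omega)
    have hninv : (0:ℝ) ≤ (n : ℝ)⁻¹ := by positivity
    have e1 : ∫ ω, |(n : ℝ)⁻¹ * X n ω| ∂μ = (n : ℝ)⁻¹ * ∫ ω, X n ω ∂μ := by
      have habs : ∀ᵐ ω ∂μ, |(n : ℝ)⁻¹ * X n ω| = (n : ℝ)⁻¹ * X n ω := by
        filter_upwards [hXnonneg n] with ω hω
        exact abs_of_nonneg (mul_nonneg hninv hω)
      rw [integral_congr_ae habs, integral_const_mul]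
    have e2 : ∫ ω, M n ω ∂μ ≤ c + n * δ c := by
      have hmono := integral_mono (hMint n)
        ((integrable_const _).add (hsum_int c n)) (hMle c n)
      have e3 : ∫ ω, ((c:ℝ) + ∑ i ∈ Finset.range n, W c (T^[i + 1] ω)) ∂μ
          = c + n * δ c := by
        rw [integral_add (integrable_const _) (hsum_int c n), integral_const]
        simp only [measure_univ, ENNReal.toReal_one, probReal_univ, one_smul]
        rw [integral_finset_sum _ (fun i _ => (show Integrable (fun ω => W c (T^[i + 1] ω)) μ
          from Stmt8.integrable_comp_iter hT (i + 1) (hWint c)))]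
        have e4 : ∀ i ∈ Finset.range n, ∫ ω, W c (T^[i + 1] ω) ∂μ = δ c := fun i _ =>
          Stmt8.integral_comp_iter hT (i + 1) (hWint c).aestronglyMeasurable
        rw [Finset.sum_congr rfl e4, Finset.sum_const, Finset.card_range,
          nsmul_eq_mul]
      rw [← e3]
      exact hmono
    rw [e1, hXint_eq n]
    calc (n : ℝ)⁻¹ * ∫ ω, M n ω ∂μ ≤ (n : ℝ)⁻¹ * (c + n * δ c) := by
          refine mul_le_mul_of_nonneg_left e2 hninv
      _ = c * (n : ℝ)⁻¹ + δ c := by field_simp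
  have hL1 : Tendsto
      (fun n : ℕ => ∫ ω, |(n : ℝ)⁻¹ * X n ω| ∂μ) atTop (nhds 0) := by
    rw [Metric.tendsto_atTop]
    intro ε hε
    have hε2 : (0:ℝ) < ε / 2 := by linarith
    obtain ⟨c, hc⟩ := (hδ.eventually (gt_mem_nhds hε2)).exists
    have htc : Tendsto (fun n : ℕ => (c : ℝ) * (n : ℝ)⁻¹) atTop (nhds 0) := by
      simpa using tendsto_inv_atTop_nhds_zero_nat.const_mul (c : ℝ)
    obtain ⟨N1, hN1⟩ := (Metric.tendsto_atTop.1 htc) (ε / 2) hε2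
    refine ⟨max N1 1, fun n hn => ?_⟩
    have hn1 : 1 ≤ n := le_trans (le_max_right _ _) hn
    have hnN1 : N1 ≤ n := le_trans (le_max_left _ _) hn
    have h1 := hL1bound c n hn1
    have h2 := hN1 n hnN1
    rw [Real.dist_eq, sub_zero] at h2 ⊢
    have hcn : (0:ℝ) ≤ (c : ℝ) * (n : ℝ)⁻¹ := by positivity
    rw [abs_of_nonneg hcn] at h2
    have hA : (0:ℝ) ≤ ∫ ω, |(n : ℝ)⁻¹ * X n ω| ∂μ :=
      integral_nonneg fun ω => abs_nonneg _
    rw [abs_of_nonneg hA]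
    calc ∫ ω, |(n : ℝ)⁻¹ * X n ω| ∂μ ≤ c * (n : ℝ)⁻¹ + δ c := h1
      _ < ε / 2 + ε / 2 := by linarith
      _ = ε := by ring
  -- a.s. convergence
  set U : ℕ → ℕ → Set Ω := fun c k =>
    {ω | ∃ n : ℕ, 1 ≤ n ∧ (n : ℝ) * ((k : ℝ) + 1)⁻¹
      < ∑ i ∈ Finset.range n, Stmt8.Q μ T F0 (W c) (i + 1) ω} with hUdef
  have hkpos : ∀ k : ℕ, (0:ℝ) < ((k : ℝ) + 1)⁻¹ := fun k => by positivity
  have hU : ∀ c k, μ (U c k) ≤ ENNReal.ofReal (((k : ℝ) + 1) * δ c) := by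
    intro c k
    have := Stmt8.hopf hT hF0 hF0T (hWpos c) (hWint c) (hkpos k)
    rw [inv_inv] at this
    exact this
  have hV : ∀ k, μ (⋂ c, U c k) = 0 := by
    intro k
    refine le_antisymm ?_ zero_le
    have hlim0 : Tendsto (fun c => ((k : ℝ) + 1) * δ c) atTop (nhds 0) := by
      simpa using hδ.const_mul ((k : ℝ) + 1)
    have hlim : Tendsto (fun c => ENNReal.ofReal (((k : ℝ) + 1) * δ c)) atTop (nhds 0) := by
      have := ENNReal.tendsto_ofReal hlim0
      simpa using this
    refine ge_of_tendsto hlim (Filter.Eventually.of_forall fun c => ?_)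
    exact le_trans (measure_mono (Set.iInter_subset _ c)) (hU c k)
  have hN2 : μ (⋃ k, ⋂ c, U c k) = 0 := measure_iUnion_null hV
  have aeN2 : ∀ᵐ ω ∂μ, ω ∉ ⋃ k, ⋂ c, U c k := by
    rw [← measure_eq_zero_iff_ae_notMem] at *
    exact hN2
  have aeXnonneg : ∀ᵐ ω ∂μ, ∀ n, 0 ≤ X n ω := ae_all_iff.2 hXnonneg
  have aeXle : ∀ᵐ ω ∂μ, ∀ c n, X n ω
      ≤ c + ∑ i ∈ Finset.range n, Stmt8.Q μ T F0 (W c) (i + 1) ω :=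
    ae_all_iff.2 fun c => ae_all_iff.2 fun n => hXle c n
  have hAS : ∀ᵐ ω ∂μ, Tendsto (fun n : ℕ => (n : ℝ)⁻¹ * X n ω) atTop (nhds 0) := by
    filter_upwards [aeN2, aeXnonneg, aeXle] with ω h3 h1 h2
    rw [Metric.tendsto_atTop]
    intro ε hε
    have hε2 : (0:ℝ) < ε / 2 := by linarith
    -- choose k with ((k:ℝ)+1)⁻¹ < ε/2
    obtain ⟨k, hk⟩ := exists_nat_gt (2 / ε)
    have hk1 : (2:ℝ) / ε < (k : ℝ) + 1 := lt_trans hk (lt_add_one _)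
    have hdpos : (0:ℝ) < 2 / ε := by positivity
    have hkε : ((k : ℝ) + 1)⁻¹ < ε / 2 := by
      calc ((k : ℝ) + 1)⁻¹ < (2 / ε)⁻¹ := inv_strictAnti₀ hdpos hk1
        _ = ε / 2 := by rw [inv_div]
    -- get c with ω ∉ U c k
    have hnotmem : ω ∉ ⋂ c, U c k := fun hmem => h3 (Set.mem_iUnion.2 ⟨k, hmem⟩)
    obtain ⟨c, hc⟩ : ∃ c, ω ∉ U c k := by
      by_contra hcon
      push_neg at hcon
      exact hnotmem (Set.mem_iInter.2 hcon)
    have hub : ∀ n : ℕ, 1 ≤ n →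
        ∑ i ∈ Finset.range n, Stmt8.Q μ T F0 (W c) (i + 1) ω
          ≤ (n : ℝ) * ((k : ℝ) + 1)⁻¹ := by
      intro n hn
      by_contra hcon
      push_neg at hcon
      exact hc ⟨n, hn, hcon⟩
    have htc : Tendsto (fun n : ℕ => (c : ℝ) * (n : ℝ)⁻¹) atTop (nhds 0) := by
      simpa using tendsto_inv_atTop_nhds_zero_nat.const_mul (c : ℝ)
    obtain ⟨N1, hN1⟩ := (Metric.tendsto_atTop.1 htc) (ε / 2 - ((k : ℝ) + 1)⁻¹)
      (by linarith)
    refine ⟨max N1 1, fun n hn => ?_⟩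
    have hn1 : 1 ≤ n := le_trans (le_max_right _ _) hn
    have hnN1 : N1 ≤ n := le_trans (le_max_left _ _) hn
    have hn0 : ((n : ℝ)) ≠ 0 := Nat.cast_ne_zero.2 (by omega)
    have hninv : (0:ℝ) ≤ (n : ℝ)⁻¹ := by positivity
    have hXn : X n ω ≤ c + (n : ℝ) * ((k : ℝ) + 1)⁻¹ :=
      le_trans (h2 c n) (by linarith [hub n hn1])
    have hbound : (n : ℝ)⁻¹ * X n ω ≤ c * (n : ℝ)⁻¹ + ((k : ℝ) + 1)⁻¹ := by
      have := mul_le_mul_of_nonneg_left hXn hninv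
      calc (n : ℝ)⁻¹ * X n ω ≤ (n : ℝ)⁻¹ * (c + (n : ℝ) * ((k : ℝ) + 1)⁻¹) := this
        _ = c * (n : ℝ)⁻¹ + ((k : ℝ) + 1)⁻¹ := by field_simp
    have h4 := hN1 n hnN1
    rw [Real.dist_eq, sub_zero] at h4 ⊢
    have hcn : (0:ℝ) ≤ (c : ℝ) * (n : ℝ)⁻¹ := by positivity
    rw [abs_of_nonneg hcn] at h4
    rw [abs_of_nonneg (mul_nonneg hninv (h1 n))]
    calc (n : ℝ)⁻¹ * X n ω ≤ c * (n : ℝ)⁻¹ + ((k : ℝ) + 1)⁻¹ := hbound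
      _ < (ε / 2 - ((k : ℝ) + 1)⁻¹) + ((k : ℝ) + 1)⁻¹ := by linarith
      _ = ε / 2 := by ring
      _ < ε := by linarith
  exact ⟨hAS, hL1⟩
end

section
/- Let (X_i) be a stationary sequence X_i = X_0 ∘ T^i with X_0 ∈ L^2, F_0-measurable, centered, where T is measure-preserving, F_i = T^{-i}(F_0) is a filtration. If Σ_{k ≥ 0} ‖X_0 E(X_k | F_0)‖_1 < ∞, then the series η = E(X_0² | I) + 2 Σ_{k>0} E(X_0 X_k | I) converges absolutely in L^1; in particular Σ_{k ≥ 1} ‖E(X_0 X_k | I)‖_1 < ∞. -/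
open MeasureTheory ProbabilityTheory Filter

open scoped ENNReal NNReal

/-- If `Σ_{k ≥ 0} ‖X₀ E(X_k|F₀)‖₁ < ∞` for the stationary sequence `X_k = X₀ ∘ T^k`,
then the series `η = E(X₀²|I) + 2 Σ_{k>0} E(X₀X_k|I)` converges absolutely in `L¹`;
in particular `Σ_{k ≥ 1} ‖E(X₀X_k|I)‖₁ < ∞`. -/
theorem stmt9 {Ω : Type*} {m0 : MeasurableSpace Ω} (μ : Measure Ω) [IsProbabilityMeasure μ]
    (T : Ω → Ω) (hT : MeasurePreserving T μ μ) (hTbij : Function.Bijective T)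
    (F0 : MeasurableSpace Ω) (hF0 : F0 ≤ m0) (hF0T : F0 ≤ F0.comap T)
    (X0 : Ω → ℝ) (hX0 : MemLp X0 2 μ) (hX0meas : StronglyMeasurable[F0] X0)
    (hX0cent : ∫ ω, X0 ω ∂μ = 0)
    (hsum : Summable fun k : ℕ => ∫ ω, |X0 ω * (μ[X0 ∘ T^[k]|F0]) ω| ∂μ) :
    Summable fun k : ℕ =>
      ∫ ω, |(μ[fun ω' => X0 ω' * X0 (T^[k + 1] ω')|MeasurableSpace.invariants T]) ω| ∂μ := by
  letI : MeasurableSpace Ω := m0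
  have hIF0 : @MeasurableSpace.invariants Ω F0 T ≤ F0 := fun s hs => hs.1
  have key : ∀ k : ℕ,
      ∫ ω, |(μ[fun ω' => X0 ω' * X0 (T^[k + 1] ω')|@MeasurableSpace.invariants Ω F0 T]) ω| ∂μ ≤
        ∫ ω, |X0 ω * (μ[X0 ∘ T^[k + 1]|F0]) ω| ∂μ := by
    intro k
    set n := k + 1 with hn
    set Y : Ω → ℝ := fun ω' => X0 ω' * X0 (T^[n] ω') with hYdef
    have hXn : MemLp (X0 ∘ T^[n]) 2 μ := hX0.comp_measurePreserving (hT.iterate n)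
    have hY : Integrable Y μ := by
      have h12 : (1 : ℝ≥0∞) / 1 = 1 / 2 + 1 / 2 := by
        rw [ENNReal.div_add_div_same, one_div_one]
        norm_num
        exact (ENNReal.div_self (by norm_num) (by norm_num)).symm
      have h := hXn.smul (φ := X0) hX0 (r := 1) (hpqr := ⟨by simpa only [one_div] using h12.symm⟩)
      rw [← memLp_one_iff_integrable]
      convert h using 1
      rfl
    have hXn1 : Integrable (X0 ∘ T^[n]) μ := hXn.integrable one_le_two
    -- pull-out property of conditional expectation:
    -- `E(X₀ · X₀∘Tⁿ | F₀) = X₀ · E(X₀∘Tⁿ | F₀)` since `X₀` is `F₀`-measurable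
    have hpull : μ[Y|F0] =ᵐ[μ] X0 * μ[X0 ∘ T^[n]|F0] :=
      condExp_mul_of_stronglyMeasurable_left (μ := μ) (m := F0) hX0meas
        (g := X0 ∘ T^[n]) (by exact hY) hXn1
    -- tower property: the invariant σ-algebra (of `F₀`-measurable invariant sets)
    -- is contained in `F₀`, so `E(·|I) = E(E(·|F₀)|I)`
    have htower : μ[μ[Y|F0]|@MeasurableSpace.invariants Ω F0 T] =ᵐ[μ]
        μ[Y|@MeasurableSpace.invariants Ω F0 T] := condExp_condExp_of_le hIF0 hF0
    calc ∫ ω, |(μ[Y|@MeasurableSpace.invariants Ω F0 T]) ω| ∂μ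
        = ∫ ω, |(μ[μ[Y|F0]|@MeasurableSpace.invariants Ω F0 T]) ω| ∂μ := by
          refine integral_congr_ae ?_
          filter_upwards [htower] with ω hω
          rw [hω]
      _ ≤ ∫ ω, |(μ[Y|F0]) ω| ∂μ := integral_abs_condExp_le _
      _ = ∫ ω, |X0 ω * (μ[X0 ∘ T^[n]|F0]) ω| ∂μ := by
          refine integral_congr_ae ?_
          filter_upwards [hpull] with ω hω
          rw [hω]
          simp
  refine Summable.of_nonneg_of_le (fun k => integral_nonneg fun ω => abs_nonneg _)
    (fun k => key k) ?_
  exact (summable_nat_add_iff 1).2 hsum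
end

section
/- Let Y_i, Y_{i+1} ∈ L^2 be adapted to (G_i) (Y_j being G_j-measurable). Then for any ε > 0, E((E(Y_{i+1}|G_{i-1}))²) ≤ ε E|E(Y_{i+1}|G_{i-1})| + ε E(|Y_{i+1}| 1_{|Y_{i+1}| > ε}) + E(Y_{i+1}² 1_{|Y_{i+1}| > ε}). -/
open MeasureTheory ProbabilityTheory Filter

section Stmt15Aux

variable {Ω : Type*} {G m0 : MeasurableSpace Ω} {μ : Measure Ω}

lemma aux_integrable_mul {f g : Ω → ℝ} (hf : MemLp f 2 μ) (hg : MemLp g 2 μ) :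
    Integrable (fun ω => f ω * g ω) μ := by
  have h := L2.integrable_inner (𝕜 := ℝ) (hf.toLp f) (hg.toLp g)
  refine h.congr ?_
  filter_upwards [hf.coeFn_toLp, hg.coeFn_toLp] with ω h1 h2
  simp [h1, h2, RCLike.inner_apply, mul_comm]

lemma aux_memℒp_condexp [IsFiniteMeasure μ] (hG : G ≤ m0)
    {f : Ω → ℝ} (hf : MemLp f 2 μ) : MemLp (μ[f|G]) 2 μ := by
  have h1 : (↑(condExpL2 ℝ ℝ hG (hf.toLp f)) : Ω → ℝ) =ᵐ[μ] μ[f|G] := by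
    refine ae_eq_condExp_of_forall_setIntegral_eq hG (hf.integrable one_le_two)
      (fun s _ _ => ((Lp.memLp _).integrable one_le_two).integrableOn)
      (fun s hs hμs => ?_) ?_
    · rw [integral_condExpL2_eq hG (hf.toLp f) hs hμs.ne]
      exact setIntegral_congr_ae (hG s hs) (hf.coeFn_toLp.mono fun x hx _ => hx)
    · exact lpMeas.aestronglyMeasurable _
  exact (Lp.memLp _).ae_eq h1

lemma aux_key (μ : Measure Ω) [IsProbabilityMeasure μ] (hG : G ≤ m0)
    (Y : Ω → ℝ) (hYm : StronglyMeasurable Y) (hY : MemLp Y 2 μ) (ε : ℝ) (hε : 0 < ε) :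
    ∫ ω, ((μ[Y|G]) ω) ^ 2 ∂μ
      ≤ ε * ∫ ω, |(μ[Y|G]) ω| ∂μ + ε * ∫ ω in {ω | ε < |Y ω|}, |Y ω| ∂μ
        + ∫ ω in {ω | ε < |Y ω|}, (Y ω) ^ 2 ∂μ := by
  set W : Ω → ℝ := fun ω => |Y ω| with hWdef
  have hA : MeasurableSet {ω | ε < |Y ω|} :=
    measurableSet_lt measurable_const hYm.measurable.abs
  set A := {ω | ε < |Y ω|} with hAdef
  set g : Ω → ℝ := A.indicator W with hgdef
  have hW2 : MemLp W 2 μ := hY.abs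
  have hg2 : MemLp g 2 μ := hW2.indicator hA
  have hYint : Integrable Y μ := hY.integrable one_le_two
  have hWint : Integrable W μ := hW2.integrable one_le_two
  have hgint : Integrable g μ := hg2.integrable one_le_two
  have hc2 : MemLp (μ[Y|G]) 2 μ := aux_memℒp_condexp hG hY
  have hd2 : MemLp (μ[W|G]) 2 μ := aux_memℒp_condexp hG hW2
  have hh2 : MemLp (μ[g|G]) 2 μ := aux_memℒp_condexp hG hg2
  have hcint : Integrable (μ[Y|G]) μ := hc2.integrable one_le_two
  have hhint : Integrable (μ[g|G]) μ := hh2.integrable one_le_two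
  have hg_nonneg : ∀ ω, 0 ≤ g ω := fun ω => Set.indicator_nonneg (fun _ _ => abs_nonneg _) ω
  have hg_le_W : ∀ ω, g ω ≤ W ω := fun ω => Set.indicator_le_self' (fun _ _ => abs_nonneg _) ω
  have hWg_le : ∀ ω, W ω - g ω ≤ ε := by
    intro ω
    by_cases hω : ω ∈ A
    · simp [hgdef, Set.indicator_of_mem hω, hε.le]
    · have : ¬ (ε < |Y ω|) := hω
      simp only [hgdef, Set.indicator_of_notMem hω, sub_zero, hWdef]
      linarith [not_lt.1 this]
  have hh0 : 0 ≤ᵐ[μ] μ[g|G] := condExp_nonneg (ae_of_all _ hg_nonneg)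
  have habs : ∀ᵐ ω ∂μ, |(μ[Y|G]) ω| ≤ (μ[W|G]) ω := by
    have h1 := condExp_mono (μ := μ) (m := G) hYint hWint
      (ae_of_all μ fun ω => le_abs_self (Y ω))
    have h2 : -(μ[Y|G]) ≤ᵐ[μ] μ[W|G] :=
      (condExp_neg Y G).symm.le.trans (condExp_mono hYint.neg hWint
        (ae_of_all μ fun ω => neg_le_abs (Y ω)))
    filter_upwards [h1, h2] with ω e1 e2
    have e2' : -((μ[Y|G]) ω) ≤ (μ[W|G]) ω := e2
    exact abs_le.2 ⟨neg_le.1 e2', e1⟩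
  have hdh : ∀ᵐ ω ∂μ, (μ[W|G]) ω ≤ ε + (μ[g|G]) ω := by
    have hsub := condExp_sub (μ := μ) (m := G) hWint hgint
    have hb : μ[W - g|G] ≤ᵐ[μ] μ[(fun _ => ε)|G] :=
      condExp_mono (hWint.sub hgint) (integrable_const ε)
        (ae_of_all μ fun ω => hWg_le ω)
    rw [condExp_const hG] at hb
    filter_upwards [hsub, hb] with ω e1 e2
    have e1' : (μ[W - g|G]) ω = (μ[W|G]) ω - (μ[g|G]) ω := e1
    have e2' : (μ[W - g|G]) ω ≤ ε := e2
    linarith [e1' ▸ e2']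
  -- integrability of products
  have i0 : Integrable (fun ω => ((μ[Y|G]) ω) ^ 2) μ := by
    simpa [pow_two] using aux_integrable_mul hc2 hc2
  have i1 : Integrable (fun ω => |(μ[Y|G]) ω| * (μ[W|G]) ω) μ := aux_integrable_mul hc2.abs hd2
  have i2 : Integrable (fun ω => |(μ[Y|G]) ω| * (μ[g|G]) ω) μ := aux_integrable_mul hc2.abs hh2
  have i3 : Integrable (fun ω => (μ[W|G]) ω * (μ[g|G]) ω) μ := aux_integrable_mul hd2 hh2
  have i4 : Integrable (fun ω => (μ[g|G]) ω * W ω) μ := aux_integrable_mul hh2 hW2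
  have i5 : Integrable (fun ω => (μ[g|G]) ω * g ω) μ := aux_integrable_mul hh2 hg2
  -- Step A : ∫ c² ≤ ∫ |c| d
  have stepA : ∫ ω, ((μ[Y|G]) ω) ^ 2 ∂μ ≤ ∫ ω, |(μ[Y|G]) ω| * (μ[W|G]) ω ∂μ := by
    refine integral_mono_ae i0 i1 ?_
    filter_upwards [habs] with ω h
    nlinarith [sq_abs ((μ[Y|G]) ω), abs_nonneg ((μ[Y|G]) ω)]
  -- Step B : ∫ |c| d ≤ ε ∫ |c| + ∫ |c| h
  have stepB : ∫ ω, |(μ[Y|G]) ω| * (μ[W|G]) ω ∂μ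
      ≤ ε * ∫ ω, |(μ[Y|G]) ω| ∂μ + ∫ ω, |(μ[Y|G]) ω| * (μ[g|G]) ω ∂μ := by
    have hmono : ∫ ω, |(μ[Y|G]) ω| * (μ[W|G]) ω ∂μ
        ≤ ∫ ω, (ε * |(μ[Y|G]) ω| + |(μ[Y|G]) ω| * (μ[g|G]) ω) ∂μ := by
      refine integral_mono_ae i1 ((hcint.abs.const_mul ε).add i2) ?_
      filter_upwards [hdh] with ω h
      nlinarith [abs_nonneg ((μ[Y|G]) ω)]
    rwa [integral_add (hcint.abs.const_mul ε) i2, integral_const_mul ε _] at hmono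
  -- Step C : ∫ |c| h ≤ ∫ d h
  have stepC : ∫ ω, |(μ[Y|G]) ω| * (μ[g|G]) ω ∂μ ≤ ∫ ω, (μ[W|G]) ω * (μ[g|G]) ω ∂μ := by
    refine integral_mono_ae i2 i3 ?_
    filter_upwards [habs, hh0] with ω e1 e2
    have e2' : (0:ℝ) ≤ (μ[g|G]) ω := e2
    nlinarith
  -- pull-out property twice
  have pull1 : μ[(μ[g|G]) * W|G] =ᵐ[μ] (μ[g|G]) * μ[W|G] :=
    condExp_mul_of_stronglyMeasurable_left stronglyMeasurable_condExp i4 hWint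
  have pull2 : μ[(μ[g|G]) * g|G] =ᵐ[μ] (μ[g|G]) * μ[g|G] :=
    condExp_mul_of_stronglyMeasurable_left stronglyMeasurable_condExp i5 hgint
  -- Step D : ∫ d h = ∫ W h
  have stepD : ∫ ω, (μ[W|G]) ω * (μ[g|G]) ω ∂μ = ∫ ω, (μ[g|G]) ω * W ω ∂μ := by
    calc ∫ ω, (μ[W|G]) ω * (μ[g|G]) ω ∂μ
        = ∫ ω, ((μ[g|G]) * μ[W|G]) ω ∂μ := by simp [Pi.mul_apply, mul_comm]
      _ = ∫ ω, (μ[(μ[g|G]) * W|G]) ω ∂μ := (integral_congr_ae pull1).symm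
      _ = ∫ ω, ((μ[g|G]) * W) ω ∂μ := integral_condExp hG
      _ = ∫ ω, (μ[g|G]) ω * W ω ∂μ := by simp [Pi.mul_apply]
  -- Step E : ∫ h W ≤ ε ∫ g + ∫ h g
  have i6 : Integrable (fun ω => (μ[g|G]) ω * (W ω - g ω)) μ :=
    (i4.sub i5).congr (ae_of_all _ fun ω => by simp only [Pi.sub_apply]; ring)
  have stepE : ∫ ω, (μ[g|G]) ω * W ω ∂μ
      ≤ ε * ∫ ω, g ω ∂μ + ∫ ω, (μ[g|G]) ω * g ω ∂μ := by
    have hsplit : ∫ ω, (μ[g|G]) ω * W ω ∂μ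
        = ∫ ω, (μ[g|G]) ω * (W ω - g ω) ∂μ + ∫ ω, (μ[g|G]) ω * g ω ∂μ := by
      rw [← integral_add i6 i5]
      congr 1; funext ω; ring
    have hb : ∫ ω, (μ[g|G]) ω * (W ω - g ω) ∂μ ≤ ∫ ω, ε * (μ[g|G]) ω ∂μ := by
      refine integral_mono_ae i6 (hhint.const_mul ε) ?_
      filter_upwards [hh0] with ω e
      have e' : (0:ℝ) ≤ (μ[g|G]) ω := e
      nlinarith [hWg_le ω, hg_le_W ω]
    have hgeq : ∫ ω, (μ[g|G]) ω ∂μ = ∫ ω, g ω ∂μ := integral_condExp hG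
    rw [integral_const_mul ε _, hgeq] at hb
    linarith [hsplit, hb]
  -- Step F : ∫ h g ≤ ∫ g g via Cauchy-Schwarz
  have stepF : ∫ ω, (μ[g|G]) ω * g ω ∂μ ≤ ∫ ω, g ω * g ω ∂μ := by
    set H : Lp ℝ 2 μ := hh2.toLp _ with hH
    set Gg : Lp ℝ 2 μ := hg2.toLp _ with hGg
    have hHG : inner (𝕜 := ℝ) H Gg = ∫ ω, (μ[g|G]) ω * g ω ∂μ := by
      rw [L2.inner_def]
      refine integral_congr_ae ?_
      filter_upwards [hh2.coeFn_toLp, hg2.coeFn_toLp] with ω e1 e2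
      simp [hH, hGg, e1, e2, RCLike.inner_apply, mul_comm]
    have hHH : inner (𝕜 := ℝ) H H = ∫ ω, (μ[g|G]) ω * (μ[g|G]) ω ∂μ := by
      rw [L2.inner_def]
      refine integral_congr_ae ?_
      filter_upwards [hh2.coeFn_toLp] with ω e1
      simp [hH, e1, RCLike.inner_apply, pow_two]
    have hGG : inner (𝕜 := ℝ) Gg Gg = ∫ ω, g ω * g ω ∂μ := by
      rw [L2.inner_def]
      refine integral_congr_ae ?_
      filter_upwards [hg2.coeFn_toLp] with ω e2
      simp [hGg, e2, RCLike.inner_apply, pow_two]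
    -- ∫ h g = ∫ h h
    have hhg_eq : ∫ ω, (μ[g|G]) ω * g ω ∂μ = ∫ ω, (μ[g|G]) ω * (μ[g|G]) ω ∂μ := by
      calc ∫ ω, (μ[g|G]) ω * g ω ∂μ
          = ∫ ω, ((μ[g|G]) * g) ω ∂μ := by simp [Pi.mul_apply]
        _ = ∫ ω, (μ[(μ[g|G]) * g|G]) ω ∂μ := (integral_condExp hG).symm
        _ = ∫ ω, ((μ[g|G]) * μ[g|G]) ω ∂μ := integral_congr_ae pull2
        _ = ∫ ω, (μ[g|G]) ω * (μ[g|G]) ω ∂μ := by simp [Pi.mul_apply]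
    have hCS : inner (𝕜 := ℝ) H Gg ≤ ‖H‖ * ‖Gg‖ := real_inner_le_norm H Gg
    have hHnorm : inner (𝕜 := ℝ) H H = ‖H‖ ^ 2 := real_inner_self_eq_norm_sq H
    have hGnorm : inner (𝕜 := ℝ) Gg Gg = ‖Gg‖ ^ 2 := real_inner_self_eq_norm_sq Gg
    have h1 : ‖H‖ ^ 2 ≤ ‖H‖ * ‖Gg‖ := by
      rw [← hHnorm, hHH, ← hhg_eq, ← hHG]; exact hCS
    have h2 : ‖H‖ ^ 2 ≤ ‖Gg‖ ^ 2 := by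
      nlinarith [norm_nonneg H, norm_nonneg Gg]
    calc ∫ ω, (μ[g|G]) ω * g ω ∂μ = ‖H‖ ^ 2 := by rw [hhg_eq, ← hHH, hHnorm]
      _ ≤ ‖Gg‖ ^ 2 := h2
      _ = ∫ ω, g ω * g ω ∂μ := by rw [← hGnorm, hGG]
  -- identify set integrals
  have hgW : ∫ ω, g ω ∂μ = ∫ ω in A, W ω ∂μ := integral_indicator hA
  have hgg : ∫ ω, g ω * g ω ∂μ = ∫ ω in A, (Y ω) ^ 2 ∂μ := by
    rw [← integral_indicator hA]
    congr 1; funext ω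
    by_cases hω : ω ∈ A
    · simp [hgdef, Set.indicator_of_mem hω, hWdef, pow_two, abs_mul_abs_self]
    · simp [hgdef, Set.indicator_of_notMem hω]
  rw [hgW] at stepE
  rw [hgg] at stepF
  linarith [stepA, stepB, stepC, stepD.le, stepE, stepF]

end Stmt15Aux

/-- `E((E(Y_{i+1}|G_{i-1}))²) ≤ ε E|E(Y_{i+1}|G_{i-1})| + ε E(|Y_{i+1}| 1_{|Y_{i+1}|>ε})
+ E(Y_{i+1}² 1_{|Y_{i+1}|>ε})`. -/
theorem stmt15 {Ω : Type*} {m0 : MeasurableSpace Ω} (μ : Measure Ω) [IsProbabilityMeasure μ]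
    (G : MeasurableSpace Ω) (hG : G ≤ m0)
    (Y : Ω → ℝ) (hY : MemLp Y 2 μ) (ε : ℝ) (hε : 0 < ε) :
    ∫ ω, ((μ[Y|G]) ω) ^ 2 ∂μ
      ≤ ε * ∫ ω, |(μ[Y|G]) ω| ∂μ + ε * ∫ ω in {ω | ε < |Y ω|}, |Y ω| ∂μ
        + ∫ ω in {ω | ε < |Y ω|}, (Y ω) ^ 2 ∂μ := by
  set Z := hY.1.mk Y with hZdef
  have hZm : StronglyMeasurable[m0] Z := hY.1.stronglyMeasurable_mk
  have hae : Y =ᵐ[μ] Z := hY.1.ae_eq_mk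
  have hZ2 : MemLp Z 2 μ := hY.ae_eq hae
  have hcond : μ[Y|G] =ᵐ[μ] μ[Z|G] := condExp_congr_ae hae
  have e1 : ∫ ω, ((μ[Y|G]) ω) ^ 2 ∂μ = ∫ ω, ((μ[Z|G]) ω) ^ 2 ∂μ :=
    integral_congr_ae (hcond.mono fun ω h => by dsimp only; rw [h])
  have e2 : ∫ ω, |(μ[Y|G]) ω| ∂μ = ∫ ω, |(μ[Z|G]) ω| ∂μ :=
    integral_congr_ae (hcond.mono fun ω h => by dsimp only; rw [h])
  have hset : {ω | ε < |Y ω|} =ᵐ[μ] ({ω | ε < |Z ω|} : Set Ω) := by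
    refine Filter.eventuallyEq_set.2 ?_
    filter_upwards [hae] with ω h
    simp [Set.mem_setOf_eq, h]
  have hres : μ.restrict {ω | ε < |Y ω|} = μ.restrict {ω | ε < |Z ω|} :=
    Measure.restrict_congr_set hset
  have e3 : ∫ ω in {ω | ε < |Y ω|}, |Y ω| ∂μ = ∫ ω in {ω | ε < |Z ω|}, |Z ω| ∂μ := by
    rw [hres]
    exact integral_congr_ae (ae_restrict_of_ae (hae.mono fun ω h => by dsimp only; rw [h]))
  have e4 : ∫ ω in {ω | ε < |Y ω|}, (Y ω) ^ 2 ∂μ = ∫ ω in {ω | ε < |Z ω|}, (Z ω) ^ 2 ∂μ := by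
    rw [hres]
    exact integral_congr_ae (ae_restrict_of_ae (hae.mono fun ω h => by dsimp only; rw [h]))
  rw [e1, e2, e3, e4]
  exact aux_key μ hG Z hZm hZ2 ε hε
end
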